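/- arXiv:1902.01765 — 5 statements merged into one kernel-verified Lean document; each statement's English description precedes it below -/
import Mathlib

section
/- There is an absolute constant A > 0 such that for every real N > 1 and every ε with 0 < ε < 1, there exists a real univariate polynomial p of degree at most A · N² · log₂(2/ε) satisfying |sign(t) − p(t)| ≤ ε for all t ∈ [−N, −1] ∪ [1, N]. -/
private lemma expquad (v : ℝ) (hv : |v| ≤ 1) : Real.exp v ≤ 1 + v + v^2 := by
  have h := Real.exp_bound hv (n := 2) (by norm_num)
  have h2 : ∑ m ∈ Finset.range 2, v ^ m / ↑(m.factorial) = 1 + v := by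
    simp [Finset.sum_range_succ]
  rw [h2] at h
  norm_num [Nat.factorial] at h
  have h3 : |v|^2 = v^2 := sq_abs v
  have := abs_le.1 h
  nlinarith [sq_nonneg v]

private lemma factor (x u : ℝ) (hx0 : 0 ≤ x) (hx1 : x ≤ 1) (hu : |u| ≤ 1) :
    x * Real.exp (u*(1-x)) + (1-x) * Real.exp (-(u*x)) ≤ 1 + u^2/4 := by
  have hax : |1-x| ≤ 1 := by rw [abs_le]; constructor <;> linarith
  have hax2 : |x| ≤ 1 := by rw [abs_le]; constructor <;> linarith
  have h1 : |u*(1-x)| ≤ 1 := by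
    rw [abs_mul]
    calc |u| * |1-x| ≤ 1*1 := mul_le_mul hu hax (abs_nonneg _) zero_le_one
      _ = 1 := by norm_num
  have h2 : |-(u*x)| ≤ 1 := by
    rw [abs_neg, abs_mul]
    calc |u| * |x| ≤ 1*1 := mul_le_mul hu hax2 (abs_nonneg _) zero_le_one
      _ = 1 := by norm_num
  have e1 := expquad _ h1
  have e2 := expquad _ h2
  nlinarith [mul_nonneg hx0 (sub_nonneg.2 hx1), sq_nonneg (2*x-1), sq_nonneg u,
    mul_nonneg (mul_nonneg hx0 (sub_nonneg.2 hx1)) (sq_nonneg u)]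

private lemma chernoff (m : ℕ) (x u δ : ℝ) (hx0 : 0 ≤ x) (hx1 : x ≤ 1)
    (hu : |u| ≤ 1) (S : Finset ℕ)
    (hS : ∀ k ∈ S, (m:ℝ)*δ ≤ u * ((k:ℝ) - m*x)) (hSr : S ⊆ Finset.range (m+1)) :
    ∑ k ∈ S, (m.choose k : ℝ) * x^k * (1-x)^(m-k) ≤ Real.exp (m * u^2/4 - m*δ) := by
  have hx1' : 0 ≤ 1 - x := by linarith
  have hb : ∀ k, 0 ≤ (m.choose k:ℝ) * x^k * (1-x)^(m-k) := fun k => by positivity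
  have step1 : ∑ k ∈ S, (m.choose k : ℝ) * x^k * (1-x)^(m-k)
      ≤ ∑ k ∈ S, ((m.choose k : ℝ) * x^k * (1-x)^(m-k)) * Real.exp (u*((k:ℝ) - m*x) - m*δ) := by
    apply Finset.sum_le_sum
    intro k hk
    have h1 : (1:ℝ) ≤ Real.exp (u*((k:ℝ) - m*x) - m*δ) := by
      rw [Real.one_le_exp_iff]
      have := hS k hk
      linarith
    exact le_mul_of_one_le_right (hb k) h1
  have step2 : ∑ k ∈ S, ((m.choose k : ℝ) * x^k * (1-x)^(m-k)) * Real.exp (u*((k:ℝ) - m*x) - m*δ)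
      ≤ ∑ k ∈ Finset.range (m+1), ((m.choose k : ℝ) * x^k * (1-x)^(m-k)) * Real.exp (u*((k:ℝ) - m*x) - m*δ) := by
    apply Finset.sum_le_sum_of_subset_of_nonneg hSr
    intro k _ _
    exact mul_nonneg (hb k) (Real.exp_nonneg _)
  have step3 : ∑ k ∈ Finset.range (m+1), ((m.choose k : ℝ) * x^k * (1-x)^(m-k)) * Real.exp (u*((k:ℝ) - m*x) - m*δ)
      = Real.exp (-(m*x*u) - m*δ) * (x * Real.exp u + (1-x))^m := by
    rw [add_pow, Finset.mul_sum]
    apply Finset.sum_congr rfl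
    intro k hk
    have : Real.exp (u*((k:ℝ) - m*x) - m*δ) = Real.exp u ^ k * Real.exp (-(m*x*u) - m*δ) := by
      rw [← Real.exp_nat_mul, ← Real.exp_add]
      ring_nf
    rw [this, mul_pow]
    ring
  have base : x * Real.exp u + (1-x) = Real.exp (u*x) * (x * Real.exp (u*(1-x)) + (1-x)*Real.exp (-(u*x))) := by
    have e1 : Real.exp (u*x) * Real.exp (u*(1-x)) = Real.exp u := by
      rw [← Real.exp_add]; ring_nf
    have e2 : Real.exp (u*x) * Real.exp (-(u*x)) = 1 := by
      rw [← Real.exp_add]; ring_nf; exact Real.exp_zero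
    calc x * Real.exp u + (1-x) = x * (Real.exp (u*x) * Real.exp (u*(1-x))) + (1-x) * (Real.exp (u*x) * Real.exp (-(u*x))) := by rw [e1, e2]; ring
      _ = Real.exp (u*x) * (x * Real.exp (u*(1-x)) + (1-x)*Real.exp (-(u*x))) := by ring
  have hfac := factor x u hx0 hx1 hu
  have hbase_nonneg : 0 ≤ x * Real.exp (u*(1-x)) + (1-x)*Real.exp (-(u*x)) := by positivity
  have step4 : Real.exp (-(m*x*u) - m*δ) * (x * Real.exp u + (1-x))^m
      ≤ Real.exp (-(m*x*u) - m*δ) * (Real.exp (u*x))^m * (1 + u^2/4)^m := by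
    rw [base, mul_pow, ← mul_assoc]
    apply mul_le_mul_of_nonneg_left _ (by positivity)
    exact pow_le_pow_left₀ hbase_nonneg hfac m
  have step5 : Real.exp (-(m*x*u) - m*δ) * (Real.exp (u*x))^m * (1 + u^2/4)^m
      ≤ Real.exp (m * u^2/4 - m*δ) := by
    have h1 : (1 + u^2/4)^m ≤ Real.exp (m * (u^2/4)) := by
      calc (1 + u^2/4)^m ≤ (Real.exp (u^2/4))^m := by
            apply pow_le_pow_left₀ (by positivity)
            have := Real.add_one_le_exp (u^2/4); linarith
        _ = Real.exp (m * (u^2/4)) := by rw [← Real.exp_nat_mul]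
    have h2 : Real.exp (-(m*x*u) - m*δ) * (Real.exp (u*x))^m = Real.exp (-(m:ℝ)*δ) := by
      rw [← Real.exp_nat_mul, ← Real.exp_add]; ring_nf
    rw [h2]
    calc Real.exp (-(m:ℝ)*δ) * (1 + u^2/4)^m ≤ Real.exp (-(m:ℝ)*δ) * Real.exp (m * (u^2/4)) :=
          mul_le_mul_of_nonneg_left h1 (Real.exp_nonneg _)
      _ = Real.exp (m * u^2/4 - m*δ) := by rw [← Real.exp_add]; ring_nf
  linarith

set_option maxHeartbeats 1000000 in
theorem stmt_3 : ∃ A : ℝ, 0 < A ∧ ∀ N : ℝ, 1 < N → ∀ ε : ℝ, 0 < ε → ε < 1 →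
    ∃ p : Polynomial ℝ, (p.natDegree : ℝ) ≤ A * N ^ 2 * Real.logb 2 (2 / ε) ∧
      ∀ t : ℝ, t ∈ Set.Icc (-N) (-1) ∪ Set.Icc 1 N →
        |Real.sign t - Polynomial.eval t p| ≤ ε := by
  refine ⟨5, by norm_num, ?_⟩
  intro N hN ε hε0 hε1
  have hN0 : (0:ℝ) < N := by linarith
  have h2N : (0:ℝ) < 2*N := by linarith
  have h2ε : (2:ℝ) ≤ 2/ε := by rw [le_div_iff₀ hε0]; nlinarith
  have hL0 : 0 < Real.log (2/ε) := Real.log_pos (by linarith)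
  set m := ⌈4*N^2*Real.log (2/ε)⌉₊ with hmdef
  set s : ℕ → ℝ := fun k => if m ≤ 2*k then 1 else -1 with hsdef
  set p := ∑ k ∈ Finset.range (m+1), Polynomial.C (s k * (m.choose k) / (2*N)^m) *
    (Polynomial.X + Polynomial.C N)^k * (Polynomial.C N - Polynomial.X)^(m-k) with hpdef
  have hN2 : (1:ℝ) ≤ N^2 := by nlinarith
  refine ⟨p, ?_, ?_⟩
  · -- degree bound
    have hdeg : p.natDegree ≤ m := by
      rw [hpdef]
      apply Polynomial.natDegree_sum_le_of_forall_le
      intro k hk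
      have hk' : k ≤ m := Nat.lt_succ_iff.mp (Finset.mem_range.mp hk)
      refine le_trans Polynomial.natDegree_mul_le ?_
      have h1 : (Polynomial.C (s k * (m.choose k) / (2*N)^m) * (Polynomial.X + Polynomial.C N)^k).natDegree ≤ k := by
        refine le_trans Polynomial.natDegree_mul_le ?_
        simp only [Polynomial.natDegree_C, zero_add]
        refine le_trans Polynomial.natDegree_pow_le ?_
        simp [Polynomial.natDegree_X_add_C]
      have h2 : ((Polynomial.C N - Polynomial.X)^(m-k)).natDegree ≤ m - k := by
        refine le_trans Polynomial.natDegree_pow_le ?_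
        have : (Polynomial.C N - Polynomial.X : Polynomial ℝ).natDegree ≤ 1 := by
          refine le_trans (Polynomial.natDegree_sub_le _ _) ?_
          simp
        nlinarith [Nat.sub_le m k]
      omega
    have hlogb1 : 1 ≤ Real.logb 2 (2/ε) := by
      rw [Real.logb, le_div_iff₀ (Real.log_pos one_lt_two), one_mul]
      exact Real.log_le_log (by norm_num) h2ε
    have hlog2lt : Real.log 2 < 1 := by
      have := Real.log_two_lt_d9; linarith
    have hmle : (m:ℝ) ≤ 4*N^2*Real.log (2/ε) + 1 :=
      le_of_lt (Nat.ceil_lt_add_one (by positivity))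
    have hlogeq : Real.log (2/ε) = Real.logb 2 (2/ε) * Real.log 2 := by
      rw [Real.logb]
      field_simp
    calc (p.natDegree : ℝ) ≤ m := by exact_mod_cast hdeg
      _ ≤ 4*N^2*Real.log (2/ε) + 1 := hmle
      _ ≤ 5 * N^2 * Real.logb 2 (2/ε) := by
          rw [hlogeq]
          nlinarith [mul_le_mul_of_nonneg_left (le_of_lt hlog2lt)
            (by positivity : (0:ℝ) ≤ 4*N^2*Real.logb 2 (2/ε)),
            mul_le_mul hN2 hlogb1 zero_le_one (by positivity)]
  · -- approximation bound
    intro t ht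
    set x := (t+N)/(2*N) with hxdef
    have hxmul : 2*N*x = t + N := by rw [hxdef]; field_simp
    have htabs : -N ≤ t ∧ t ≤ N := by
      rcases ht with h | h <;> obtain ⟨h1, h2⟩ := h <;> constructor <;> linarith
    have hx0 : 0 ≤ x := by
      rw [hxdef]; apply div_nonneg; linarith [htabs.1]; linarith
    have hx1 : x ≤ 1 := by
      rw [hxdef, div_le_one h2N]; linarith [htabs.2]
    -- evaluation formula
    have evalp : Polynomial.eval t p = ∑ k ∈ Finset.range (m+1),
        s k * ((m.choose k:ℝ) * x^k * (1-x)^(m-k)) := by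
      rw [hpdef, Polynomial.eval_finset_sum]
      apply Finset.sum_congr rfl
      intro k hk
      have hk' : k ≤ m := Nat.lt_succ_iff.mp (Finset.mem_range.mp hk)
      simp only [Polynomial.eval_mul, Polynomial.eval_pow, Polynomial.eval_add,
        Polynomial.eval_sub, Polynomial.eval_C, Polynomial.eval_X]
      have hone_sub : 1 - x = (N-t)/(2*N) := by rw [hxdef]; field_simp; ring
      rw [hxdef, hone_sub, div_pow, div_pow]
      have hpow : (2*N)^m = (2*N)^k * (2*N)^(m-k) := by
        rw [← pow_add, Nat.add_sub_cancel' hk']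
      rw [hpow]
      have h1 : (2*N)^k ≠ 0 := by positivity
      have h2 : (2*N)^(m-k) ≠ 0 := by positivity
      field_simp
    -- partition of unity
    have hone : ∑ k ∈ Finset.range (m+1), (m.choose k:ℝ) * x^k * (1-x)^(m-k) = 1 := by
      have h := add_pow x (1-x) m
      have h2 : x + (1-x) = 1 := by ring
      rw [h2, one_pow] at h
      conv_rhs => rw [h]
      apply Finset.sum_congr rfl
      intro k _
      ring
    have hb : ∀ k, 0 ≤ (m.choose k:ℝ) * x^k * (1-x)^(m-k) := by
      intro k
      have : 0 ≤ 1 - x := by linarith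
      positivity
    -- exponential bound on tail
    have hmge : 4*N^2*Real.log (2/ε) ≤ m := Nat.le_ceil _
    have hexpbound : Real.exp ((m:ℝ) * (1/N)^2/4 - m*(1/(2*N^2))) ≤ ε/2 := by
      have harg : (m:ℝ) * (1/N)^2/4 - m*(1/(2*N^2)) = -((m:ℝ)/(4*N^2)) := by
        field_simp; ring
      rw [harg]
      have h1 : Real.log (2/ε) ≤ (m:ℝ)/(4*N^2) := by
        rw [le_div_iff₀ (by positivity)]
        linarith
      calc Real.exp (-((m:ℝ)/(4*N^2))) ≤ Real.exp (-(Real.log (2/ε))) := by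
            apply Real.exp_le_exp.2; linarith
        _ = ε/2 := by
            rw [Real.exp_neg, Real.exp_log (by positivity)]
            field_simp
    have hNne : N ≠ 0 := ne_of_gt hN0
    clear_value x p s m
    have huabs : |(1/N : ℝ)| ≤ 1 := by
      rw [abs_of_pos (by positivity), div_le_one hN0]; linarith
    have huabs' : |(-(1/N) : ℝ)| ≤ 1 := by rwa [abs_neg]
    rcases ht with hneg | hpos
    · -- t ∈ [-N, -1], sign = -1
      obtain ⟨ht1, ht2⟩ := hneg
      have hsign : Real.sign t = -1 := Real.sign_of_neg (by linarith)
      set S := (Finset.range (m+1)).filter (fun k => m ≤ 2*k) with hSdef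
      have hdiff : Real.sign t - Polynomial.eval t p = -(2 * ∑ k ∈ S, (m.choose k:ℝ) * x^k * (1-x)^(m-k)) := by
        rw [hsign, evalp]
        have e1 : (-1 : ℝ) - ∑ k ∈ Finset.range (m+1), s k * ((m.choose k:ℝ) * x^k * (1-x)^(m-k))
            = ∑ k ∈ Finset.range (m+1), (-1 - s k) * ((m.choose k:ℝ) * x^k * (1-x)^(m-k)) := by
          calc (-1 : ℝ) - ∑ k ∈ Finset.range (m+1), s k * ((m.choose k:ℝ) * x^k * (1-x)^(m-k))
              = -1 * ∑ k ∈ Finset.range (m+1), ((m.choose k:ℝ) * x^k * (1-x)^(m-k))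
                - ∑ k ∈ Finset.range (m+1), s k * ((m.choose k:ℝ) * x^k * (1-x)^(m-k)) := by rw [hone]; ring
            _ = ∑ k ∈ Finset.range (m+1), (-1 - s k) * ((m.choose k:ℝ) * x^k * (1-x)^(m-k)) := by
                rw [Finset.mul_sum, ← Finset.sum_sub_distrib]
                apply Finset.sum_congr rfl
                intro k _
                ring
        rw [e1, ← Finset.sum_filter_add_sum_filter_not (Finset.range (m+1)) (fun k => m ≤ 2*k)]
        have e2 : ∑ k ∈ (Finset.range (m+1)).filter (fun k => ¬ m ≤ 2*k),
            (-1 - s k) * ((m.choose k:ℝ) * x^k * (1-x)^(m-k)) = 0 := by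
          apply Finset.sum_eq_zero
          intro k hk
          simp only [Finset.mem_filter] at hk
          have hsk : s k = -1 := by rw [hsdef]; simp [hk.2]
          rw [hsk]
          ring
        rw [e2, add_zero, Finset.mul_sum, ← Finset.sum_neg_distrib]
        apply Finset.sum_congr rfl
        intro k hk
        simp only [hSdef, Finset.mem_filter] at hk
        have hsk : s k = 1 := by rw [hsdef]; simp [hk.2]
        rw [hsk]
        ring
      have hcher := chernoff m x (1/N) (1/(2*N^2)) hx0 hx1 huabs S ?_ (Finset.filter_subset _ _)
      · have hSnn : 0 ≤ ∑ k ∈ S, (m.choose k:ℝ) * x^k * (1-x)^(m-k) :=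
          Finset.sum_nonneg (fun k _ => hb k)
        rw [hdiff, abs_neg, abs_of_nonneg (by linarith)]
        calc 2 * ∑ k ∈ S, (m.choose k:ℝ) * x^k * (1-x)^(m-k)
            ≤ 2 * Real.exp ((m:ℝ) * (1/N)^2/4 - m*(1/(2*N^2))) := by linarith
          _ ≤ 2 * (ε/2) := by linarith
          _ = ε := by ring
      · intro k hk
        simp only [hSdef, Finset.mem_filter, Finset.mem_range] at hk
        have hk2 : (m:ℝ) ≤ 2*k := by exact_mod_cast hk.2
        have hxle : 2*N*x ≤ N - 1 := by rw [hxmul]; linarith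
        have hmnn : (0:ℝ) ≤ m := Nat.cast_nonneg m
        rw [show (1/N : ℝ) * ((k:ℝ) - m*x) = (2*N*(k:ℝ) - m*(2*N*x))/(2*N^2) by field_simp]
        rw [mul_one_div, div_le_div_iff₀ (by positivity) (by positivity)]
        nlinarith [mul_le_mul_of_nonneg_left hxle hmnn, mul_le_mul_of_nonneg_left hk2 (le_of_lt hN0)]
    · -- t ∈ [1, N], sign = 1
      obtain ⟨ht1, ht2⟩ := hpos
      have hsign : Real.sign t = 1 := Real.sign_of_pos (by linarith)
      set S := (Finset.range (m+1)).filter (fun k => ¬ m ≤ 2*k) with hSdef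
      have hdiff : Real.sign t - Polynomial.eval t p = 2 * ∑ k ∈ S, (m.choose k:ℝ) * x^k * (1-x)^(m-k) := by
        rw [hsign, evalp]
        have e1 : (1 : ℝ) - ∑ k ∈ Finset.range (m+1), s k * ((m.choose k:ℝ) * x^k * (1-x)^(m-k))
            = ∑ k ∈ Finset.range (m+1), (1 - s k) * ((m.choose k:ℝ) * x^k * (1-x)^(m-k)) := by
          calc (1 : ℝ) - ∑ k ∈ Finset.range (m+1), s k * ((m.choose k:ℝ) * x^k * (1-x)^(m-k))
              = ∑ k ∈ Finset.range (m+1), (m.choose k:ℝ) * x^k * (1-x)^(m-k)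
                - ∑ k ∈ Finset.range (m+1), s k * ((m.choose k:ℝ) * x^k * (1-x)^(m-k)) := by rw [hone]
            _ = ∑ k ∈ Finset.range (m+1), (1 - s k) * ((m.choose k:ℝ) * x^k * (1-x)^(m-k)) := by
                rw [← Finset.sum_sub_distrib]
                apply Finset.sum_congr rfl
                intro k _
                ring
        rw [e1, ← Finset.sum_filter_add_sum_filter_not (Finset.range (m+1)) (fun k => m ≤ 2*k)]
        have e2 : ∑ k ∈ (Finset.range (m+1)).filter (fun k => m ≤ 2*k),
            (1 - s k) * ((m.choose k:ℝ) * x^k * (1-x)^(m-k)) = 0 := by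
          apply Finset.sum_eq_zero
          intro k hk
          simp only [Finset.mem_filter] at hk
          have hsk : s k = 1 := by rw [hsdef]; simp [hk.2]
          rw [hsk]
          ring
        rw [e2, zero_add, Finset.mul_sum]
        apply Finset.sum_congr rfl
        intro k hk
        simp only [hSdef, Finset.mem_filter] at hk
        have hsk : s k = -1 := by rw [hsdef]; simp [hk.2]
        rw [hsk]
        ring
      have hcher := chernoff m x (-(1/N)) (1/(2*N^2)) hx0 hx1 huabs' S ?_ (Finset.filter_subset _ _)
      · have hSnn : 0 ≤ ∑ k ∈ S, (m.choose k:ℝ) * x^k * (1-x)^(m-k) :=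
          Finset.sum_nonneg (fun k _ => hb k)
        rw [hdiff, abs_of_nonneg (by linarith)]
        have hsq : (-(1/N) : ℝ)^2 = (1/N)^2 := by ring
        rw [hsq] at hcher
        calc 2 * ∑ k ∈ S, (m.choose k:ℝ) * x^k * (1-x)^(m-k)
            ≤ 2 * Real.exp ((m:ℝ) * (1/N)^2/4 - m*(1/(2*N^2))) := by linarith
          _ ≤ 2 * (ε/2) := by linarith
          _ = ε := by ring
      · intro k hk
        simp only [hSdef, Finset.mem_filter, Finset.mem_range, not_le] at hk
        have hk2 : (2*k:ℝ) + 1 ≤ m := by exact_mod_cast hk.2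
        have hxge : N + 1 ≤ 2*N*x := by rw [hxmul]; linarith
        have hmnn : (0:ℝ) ≤ m := Nat.cast_nonneg m
        rw [show (-(1/N) : ℝ) * ((k:ℝ) - m*x) = (m*(2*N*x) - 2*N*(k:ℝ))/(2*N^2) by field_simp; ring]
        rw [mul_one_div, div_le_div_iff₀ (by positivity) (by positivity)]
        nlinarith [mul_le_mul_of_nonneg_left hxge hmnn, mul_le_mul_of_nonneg_left hk2 (le_of_lt hN0)]
end

section
/- Let X ⊆ ℝ^a and Y ⊆ ℝ^b be nonempty finite sets, let f : X → {−1, 1} and g : Y → {−1, 1}, and let d be a nonnegative integer. Suppose there exist real polynomials p₁, q₁ in a variables and p₂, q₂ in b variables, each of total degree at most d, with q₁ nonvanishing on X and q₂ nonvanishing on Y, such that sup_{x ∈ X} |f(x) − p₁(x)/q₁(x)| + sup_{y ∈ Y} |g(y) − p₂(y)/q₂(y)| < 1. Then there exists a real polynomial P in a + b variables of total degree at most 4d with P(x, y) ≠ 0 and sgn P(x, y) = (f ∧ g)(x, y) for all (x, y) ∈ X × Y; in particular degthr(f ∧ g) ≤ 4d. -/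
private lemma stmt_5_neg (t₁ t₂ e₁ e₂ : ℝ) (h1 : 0 ≤ e₁) (h2 : 0 ≤ e₂)
    (h3 : e₁ + e₂ < 1) (h4 : 2 - e₁ ≤ t₁) (h5 : 2 - e₂ ≤ t₂) : 2 - t₁ * t₂ < 0 := by
  nlinarith

private lemma stmt_5_key (s₁ s₂ ε₁ ε₂ : ℝ) (h1 : 0 ≤ ε₁) (h2 : 0 ≤ ε₂) (h3 : ε₁ + ε₂ < 1)
    (h4 : |s₁| ≤ ε₁) (h5 : |s₂| ≤ 2 + ε₂) : |s₁ * s₂| < 2 := by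
  rw [abs_mul]
  have := abs_nonneg s₁
  have := abs_nonneg s₂
  nlinarith

theorem stmt_5 (a b d : ℕ) (X : Finset (Fin a → ℝ)) (Y : Finset (Fin b → ℝ))
    (hX : X.Nonempty) (hY : Y.Nonempty)
    (f : (Fin a → ℝ) → ℝ) (g : (Fin b → ℝ) → ℝ)
    (hf : ∀ x ∈ X, f x = -1 ∨ f x = 1) (hg : ∀ y ∈ Y, g y = -1 ∨ g y = 1)
    (p₁ q₁ : MvPolynomial (Fin a) ℝ) (p₂ q₂ : MvPolynomial (Fin b) ℝ)
    (hp₁ : p₁.totalDegree ≤ d) (hq₁ : q₁.totalDegree ≤ d)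
    (hp₂ : p₂.totalDegree ≤ d) (hq₂ : q₂.totalDegree ≤ d)
    (hq₁0 : ∀ x ∈ X, MvPolynomial.eval x q₁ ≠ 0)
    (hq₂0 : ∀ y ∈ Y, MvPolynomial.eval y q₂ ≠ 0)
    (e₁ e₂ : ℝ)
    (he₁ : ∀ x ∈ X, |f x - MvPolynomial.eval x p₁ / MvPolynomial.eval x q₁| ≤ e₁)
    (he₂ : ∀ y ∈ Y, |g y - MvPolynomial.eval y p₂ / MvPolynomial.eval y q₂| ≤ e₂)
    (he : e₁ + e₂ < 1) :
    ∃ P : MvPolynomial (Fin a ⊕ Fin b) ℝ, P.totalDegree ≤ 4 * d ∧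
      ∀ x ∈ X, ∀ y ∈ Y,
        MvPolynomial.eval (Sum.elim x y) P ≠ 0 ∧
        Real.sign (MvPolynomial.eval (Sum.elim x y) P) =
          (if f x = -1 ∧ g y = -1 then (-1 : ℝ) else 1) := by
  classical
  obtain ⟨x₀, hx₀⟩ := hX
  obtain ⟨y₀, hy₀⟩ := hY
  have he₁0 : 0 ≤ e₁ := le_trans (abs_nonneg _) (he₁ x₀ hx₀)
  have he₂0 : 0 ≤ e₂ := le_trans (abs_nonneg _) (he₂ y₀ hy₀)
  have he₁1 : e₁ < 1 := by linarith
  have he₂1 : e₂ < 1 := by linarith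
  refine ⟨MvPolynomial.C 2 * (MvPolynomial.rename Sum.inl q₁) ^ 2 *
      (MvPolynomial.rename Sum.inr q₂) ^ 2 -
      (MvPolynomial.rename Sum.inl ((q₁ - p₁) * q₁)) *
      (MvPolynomial.rename Sum.inr ((q₂ - p₂) * q₂)), ?_, ?_⟩
  · have hr₁ : (MvPolynomial.rename (Sum.inl : Fin a → Fin a ⊕ Fin b) q₁).totalDegree ≤ d :=
      le_trans (MvPolynomial.totalDegree_rename_le _ _) hq₁
    have hr₂ : (MvPolynomial.rename (Sum.inr : Fin b → Fin a ⊕ Fin b) q₂).totalDegree ≤ d :=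
      le_trans (MvPolynomial.totalDegree_rename_le _ _) hq₂
    have hs₁ : (MvPolynomial.rename (Sum.inl : Fin a → Fin a ⊕ Fin b)
        ((q₁ - p₁) * q₁)).totalDegree ≤ 2 * d := by
      refine le_trans (MvPolynomial.totalDegree_rename_le _ _) ?_
      refine le_trans (MvPolynomial.totalDegree_mul _ _) ?_
      have := le_trans (MvPolynomial.totalDegree_sub q₁ p₁) (max_le hq₁ hp₁)
      omega
    have hs₂ : (MvPolynomial.rename (Sum.inr : Fin b → Fin a ⊕ Fin b)
        ((q₂ - p₂) * q₂)).totalDegree ≤ 2 * d := by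
      refine le_trans (MvPolynomial.totalDegree_rename_le _ _) ?_
      refine le_trans (MvPolynomial.totalDegree_mul _ _) ?_
      have := le_trans (MvPolynomial.totalDegree_sub q₂ p₂) (max_le hq₂ hp₂)
      omega
    refine le_trans (MvPolynomial.totalDegree_sub _ _) (max_le ?_ ?_)
    · refine le_trans (MvPolynomial.totalDegree_mul _ _) ?_
      have h1 := le_trans (MvPolynomial.totalDegree_mul (MvPolynomial.C 2)
        ((MvPolynomial.rename (Sum.inl : Fin a → Fin a ⊕ Fin b) q₁) ^ 2))
        (by simpa [MvPolynomial.totalDegree_C] using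
          le_trans (MvPolynomial.totalDegree_pow _ 2) (by omega : 2 * (MvPolynomial.rename
            (Sum.inl : Fin a → Fin a ⊕ Fin b) q₁).totalDegree ≤ 2 * d))
      have h2 := le_trans (MvPolynomial.totalDegree_pow (MvPolynomial.rename
        (Sum.inr : Fin b → Fin a ⊕ Fin b) q₂) 2) (by omega : 2 * (MvPolynomial.rename
        (Sum.inr : Fin b → Fin a ⊕ Fin b) q₂).totalDegree ≤ 2 * d)
      omega
    · exact le_trans (MvPolynomial.totalDegree_mul _ _) (by omega)
  · intro x hx y hy
    have hu0 := hq₁0 x hx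
    have hw0 := hq₂0 y hy
    have hb1 := he₁ x hx
    have hb2 := he₂ y hy
    have heval : MvPolynomial.eval (Sum.elim x y)
        (MvPolynomial.C 2 * (MvPolynomial.rename Sum.inl q₁) ^ 2 *
          (MvPolynomial.rename Sum.inr q₂) ^ 2 -
          (MvPolynomial.rename Sum.inl ((q₁ - p₁) * q₁)) *
          (MvPolynomial.rename Sum.inr ((q₂ - p₂) * q₂)))
        = (MvPolynomial.eval x q₁) ^ 2 * (MvPolynomial.eval y q₂) ^ 2 *
          (2 - (1 - MvPolynomial.eval x p₁ / MvPolynomial.eval x q₁) *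
            (1 - MvPolynomial.eval y p₂ / MvPolynomial.eval y q₂)) := by
      simp only [map_sub, map_mul, map_pow, MvPolynomial.eval_C,
        MvPolynomial.eval_rename, Sum.elim_comp_inl, Sum.elim_comp_inr]
      field_simp
    rw [heval]
    clear heval
    obtain ⟨u, hu⟩ : ∃ u, MvPolynomial.eval x q₁ = u := ⟨_, rfl⟩
    obtain ⟨w, hw⟩ : ∃ w, MvPolynomial.eval y q₂ = w := ⟨_, rfl⟩
    obtain ⟨P1, hP1⟩ : ∃ v, MvPolynomial.eval x p₁ = v := ⟨_, rfl⟩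
    obtain ⟨P2, hP2⟩ : ∃ v, MvPolynomial.eval y p₂ = v := ⟨_, rfl⟩
    rw [hu] at hu0 hb1 ⊢
    rw [hw] at hw0 hb2 ⊢
    rw [hP1] at hb1 ⊢
    rw [hP2] at hb2 ⊢
    clear hu hw hP1 hP2 hq₁0 hq₂0 he₁ he₂ hp₁ hq₁ hp₂ hq₂
    clear p₁ q₁ p₂ q₂
    have hsq : 0 < u ^ 2 * w ^ 2 :=
      mul_pos ((sq_nonneg u).lt_of_ne (Ne.symm (pow_ne_zero 2 hu0)))
        ((sq_nonneg w).lt_of_ne (Ne.symm (pow_ne_zero 2 hw0)))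
    rcases hf x hx with hfx | hfx <;> rcases hg y hy with hgy | hgy
    · -- both -1
      rw [hfx] at hb1
      rw [hgy] at hb2
      rw [abs_le] at hb1 hb2
      have h1 : 2 - e₁ ≤ 1 - P1 / u := by linarith [hb1.2]
      have h2 : 2 - e₂ ≤ 1 - P2 / w := by linarith [hb2.2]
      have hneg : 2 - (1 - P1 / u) * (1 - P2 / w) < 0 :=
        stmt_5_neg _ _ _ _ he₁0 he₂0 he h1 h2
      have hlt : u ^ 2 * w ^ 2 * (2 - (1 - P1 / u) * (1 - P2 / w)) < 0 :=
        mul_neg_of_pos_of_neg hsq hneg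
      exact ⟨ne_of_lt hlt, by rw [Real.sign_of_neg hlt, if_pos ⟨hfx, hgy⟩]⟩
    all_goals {
      have habs1 : |1 - P1 / u| ≤ if f x = 1 then e₁ else 2 + e₁ := by
        split
        · next h => rw [h] at hb1; exact hb1
        · next h =>
            have hfm : f x = -1 := (hf x hx).resolve_right h
            rw [hfm, abs_le] at hb1
            rw [abs_le]
            constructor <;> linarith [hb1.1, hb1.2]
      have habs2 : |1 - P2 / w| ≤ if g y = 1 then e₂ else 2 + e₂ := by
        split
        · next h => rw [h] at hb2; exact hb2
        · next h =>
            have hgm : g y = -1 := (hg y hy).resolve_right h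
            rw [hgm, abs_le] at hb2
            rw [abs_le]
            constructor <;> linarith [hb2.1, hb2.2]
      have hprod : |(1 - P1 / u) * (1 - P2 / w)| < 2 := by
        by_cases h : f x = 1
        · rw [if_pos h] at habs1
          have h2' : |1 - P2 / w| ≤ 2 + e₂ := le_trans habs2 (by split <;> linarith)
          exact stmt_5_key _ _ e₁ e₂ he₁0 he₂0 he habs1 h2'
        · have hg1 : g y = 1 := by first | exact hgy | exact absurd hfx h
          rw [if_pos hg1] at habs2
          have h1' : |1 - P1 / u| ≤ 2 + e₁ := le_trans habs1 (by split <;> linarith)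
          rw [mul_comm]
          exact stmt_5_key _ _ e₂ e₁ he₂0 he₁0 (by linarith) habs2 h1'
      have hpos : 0 < 2 - (1 - P1 / u) * (1 - P2 / w) := by
        have := abs_lt.mp hprod
        linarith [this.1, this.2]
      have hgt : 0 < u ^ 2 * w ^ 2 * (2 - (1 - P1 / u) * (1 - P2 / w)) :=
        mul_pos hsq hpos
      refine ⟨ne_of_gt hgt, ?_⟩
      rw [Real.sign_of_pos hgt, if_neg (by
        rintro ⟨hc1, hc2⟩
        rw [hfx] at hc1
        rw [hgy] at hc2
        linarith)]
    }
end

section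
/- Fix an integer m ≥ 2, a positive integer n, and a real ε with 0 < ε < 1. Then the number of tuples (z_1, ..., z_n) ∈ {0, 1, ..., m−1}^n whose associated multiset Z = {z_1, ..., z_n} satisfies disc(Z, m) ≥ ε is at most 4m · exp(−n·ε²/8) · m^n. Equivalently, if Z is a random multiset of size n whose elements are chosen independently and uniformly at random from {0, 1, ..., m−1}, then Prob[disc(Z, m) ≥ ε] ≤ 4m · exp(−n·ε²/8). -/
set_option maxHeartbeats 1000000
open Finset

lemma my_exp_mul_le (l x : ℝ) (hx : |x| ≤ 1) :
    Real.exp (l * x) ≤ Real.cosh l + x * Real.sinh l := by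
  obtain ⟨hx1, hx2⟩ := abs_le.1 hx
  have h1 : (0:ℝ) ≤ (1 + x) / 2 := by linarith
  have h2 : (0:ℝ) ≤ (1 - x) / 2 := by linarith
  have hsum : (1 + x) / 2 + (1 - x) / 2 = 1 := by ring
  have := convexOn_exp.2 (Set.mem_univ l) (Set.mem_univ (-l)) h1 h2 hsum
  simp only [smul_eq_mul] at this
  calc Real.exp (l * x) = Real.exp ((1+x)/2 * l + (1-x)/2 * (-l)) := by congr 1; ring
    _ ≤ (1+x)/2 * Real.exp l + (1-x)/2 * Real.exp (-l) := this
    _ = Real.cosh l + x * Real.sinh l := by rw [Real.cosh_eq, Real.sinh_eq]; ring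

lemma my_chernoff (m n : ℕ) (hn : 0 < n) (g : Fin m → ℝ) (hb : ∀ w, |g w| ≤ 1)
    (h0 : ∑ w, g w = 0) (t : ℝ) (ht : 0 ≤ t) :
    ((Finset.univ.filter fun z : Fin n → Fin m => t ≤ ∑ j, g (z j)).card : ℝ) ≤
      (m : ℝ) ^ n * Real.exp (-(t ^ 2) / (2 * n)) := by
  have hnR : (0:ℝ) < n := Nat.cast_pos.2 hn
  set l : ℝ := t / n with hl
  have hlpos : 0 ≤ l := div_nonneg ht hnR.le
  set F := Finset.univ.filter fun z : Fin n → Fin m => t ≤ ∑ j, g (z j) with hF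
  have key1 : (F.card : ℝ) * Real.exp (l * t) ≤ (∑ w, Real.exp (l * g w)) ^ n := by
    have h1 : (F.card : ℝ) * Real.exp (l * t) = ∑ _z ∈ F, Real.exp (l * t) := by
      rw [sum_const, nsmul_eq_mul]
    rw [h1]
    calc ∑ z ∈ F, Real.exp (l * t)
        ≤ ∑ z ∈ F, Real.exp (l * ∑ j, g (z j)) := by
          apply sum_le_sum
          intro z hz
          exact Real.exp_le_exp.2 (mul_le_mul_of_nonneg_left (mem_filter.1 hz).2 hlpos)
      _ ≤ ∑ z : Fin n → Fin m, Real.exp (l * ∑ j, g (z j)) :=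
          sum_le_sum_of_subset_of_nonneg (filter_subset _ _)
            (fun _ _ _ => (Real.exp_pos _).le)
      _ = ∑ z : Fin n → Fin m, ∏ j, Real.exp (l * g (z j)) := by
          apply sum_congr rfl
          intro z _
          rw [mul_sum, Real.exp_sum]
      _ = (∑ w, Real.exp (l * g w)) ^ n := (Fintype.sum_pow (fun w : Fin m => Real.exp (l * g w)) n).symm
  have bound : ∑ w, Real.exp (l * g w) ≤ m * Real.exp (l ^ 2 / 2) := by
    calc ∑ w, Real.exp (l * g w) ≤ ∑ w : Fin m, (Real.cosh l + g w * Real.sinh l) :=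
        sum_le_sum fun w _ => my_exp_mul_le l (g w) (hb w)
      _ = m * Real.cosh l + (∑ w, g w) * Real.sinh l := by
          rw [sum_add_distrib, sum_const, ← sum_mul, nsmul_eq_mul, card_univ, Fintype.card_fin]
      _ = m * Real.cosh l := by rw [h0]; ring
      _ ≤ m * Real.exp (l ^ 2 / 2) :=
          mul_le_mul_of_nonneg_left (Real.cosh_le_exp_half_sq l) (Nat.cast_nonneg m)
  have hexp : (0:ℝ) < Real.exp (l * t) := Real.exp_pos _
  have hc : (F.card : ℝ) ≤ (∑ w, Real.exp (l * g w)) ^ n * Real.exp (-(l * t)) := by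
    rw [Real.exp_neg, ← div_eq_mul_inv, le_div_iff₀ hexp]
    exact key1
  have hsumnn : (0:ℝ) ≤ ∑ w, Real.exp (l * g w) :=
    sum_nonneg fun w _ => (Real.exp_pos _).le
  calc (F.card : ℝ) ≤ (∑ w, Real.exp (l * g w)) ^ n * Real.exp (-(l * t)) := hc
    _ ≤ ((m:ℝ) * Real.exp (l ^ 2 / 2)) ^ n * Real.exp (-(l * t)) := by
        gcongr
    _ = (m:ℝ) ^ n * Real.exp (-(t ^ 2) / (2 * n)) := by
        rw [mul_pow, ← Real.exp_nat_mul, mul_assoc, ← Real.exp_add]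
        congr 2
        rw [hl]
        field_simp
        ring

lemma my_root_sum_zero (m k : ℕ) (hk0 : 0 < k) (hkm : k < m) :
    ∑ w : Fin m, Complex.exp (2 * Real.pi * Complex.I * k * (w : ℕ) / m) = 0 := by
  have hm0 : (m:ℂ) ≠ 0 := Nat.cast_ne_zero.2 (by omega)
  set x : ℂ := Complex.exp (2 * Real.pi * Complex.I * k / m) with hxdef
  have hterm : ∀ w : Fin m,
      Complex.exp (2 * Real.pi * Complex.I * k * (w:ℕ) / m) = x ^ (w:ℕ) := by
    intro w
    rw [hxdef, ← Complex.exp_nat_mul]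
    congr 1; ring
  have h2pi : (2 * (Real.pi:ℂ) * Complex.I) ≠ 0 := by
    simp [Real.pi_ne_zero, Complex.I_ne_zero]
  have hx1 : x ≠ 1 := by
    intro h
    rw [hxdef, Complex.exp_eq_one_iff] at h
    obtain ⟨j, hj⟩ := h
    have hj' : (2 * (Real.pi:ℂ) * Complex.I) * (k:ℂ) =
        (2 * (Real.pi:ℂ) * Complex.I) * ((j:ℂ) * m) := by
      field_simp at hj
      linear_combination (2 * (Real.pi:ℂ) * Complex.I) * hj
    have hkc : (k:ℂ) = (j:ℂ) * m := mul_left_cancel₀ h2pi hj'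
    have hkz : (k:ℤ) = j * m := by exact_mod_cast hkc
    have hmz : (0:ℤ) ≤ m := Int.natCast_nonneg m
    rcases le_or_gt j 0 with hj0 | hj0
    · have : (k:ℤ) ≤ 0 := hkz ▸ mul_nonpos_of_nonpos_of_nonneg hj0 hmz
      omega
    · have : (m:ℤ) ≤ j * m := le_mul_of_one_le_left hmz hj0
      omega
  have hxm : x ^ m = 1 := by
    rw [hxdef, ← Complex.exp_nat_mul]
    have : (m:ℂ) * (2 * Real.pi * Complex.I * k / m) = (k:ℕ) * (2 * Real.pi * Complex.I) := by
      field_simp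
    rw [this, Complex.exp_nat_mul_two_pi_mul_I]
  calc ∑ w : Fin m, Complex.exp (2 * Real.pi * Complex.I * k * (w:ℕ) / m)
      = ∑ w : Fin m, x ^ (w:ℕ) := sum_congr rfl fun w _ => hterm w
    _ = ∑ i ∈ range m, x ^ i := Fin.sum_univ_eq_sum_range _ m
    _ = (x ^ m - 1) / (x - 1) := geom_sum_eq hx1 m
    _ = 0 := by rw [hxm]; simp

lemma my_abs_exp_one (m k w : ℕ) :
    ‖Complex.exp (2 * Real.pi * Complex.I * k * w / m)‖ = 1 := by
  have h : (2 * (Real.pi:ℂ) * Complex.I * k * w / m) =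
      ((2 * Real.pi * k * w / m : ℝ) : ℂ) * Complex.I := by
    push_cast; ring
  rw [h, Complex.norm_exp_ofReal_mul_I]

/-- The `m`-discrepancy of a finite multiset `Z` of integers:
`disc(Z, m) = max_{k = 1, …, m−1} |(1/|Z|) · Σ_{z ∈ Z} exp(2πi·k·z/m)|`,
with the convention `disc(∅, m) = 0`. -/
noncomputable def disc (Z : Multiset ℤ) (m : ℕ) : ℝ :=
  if h : (Finset.Ioo 0 m).Nonempty then
    (Finset.Ioo 0 m).sup' h fun k =>
      ‖(Z.map fun z : ℤ =>
        Complex.exp (2 * Real.pi * Complex.I * (k : ℂ) * (z : ℂ) / (m : ℂ))).sum‖ / (Z.card : ℝ)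
  else 0

open Classical in
theorem stmt_7 (m n : ℕ) (hm : 2 ≤ m) (hn : 0 < n) (ε : ℝ) (hε0 : 0 < ε) (hε1 : ε < 1) :
    ((Finset.univ.filter fun z : Fin n → Fin m =>
        ε ≤ disc (Multiset.map (fun i => ((z i : ℕ) : ℤ)) Finset.univ.val) m).card : ℝ) ≤
      4 * m * Real.exp (-(n * ε ^ 2) / 8) * (m : ℝ) ^ n := by
  have hnR : (0:ℝ) < n := Nat.cast_pos.2 hn
  have hne : (Finset.Ioo 0 m).Nonempty := ⟨1, by simp; omega⟩
  set E := Finset.univ.filter fun z : Fin n → Fin m =>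
    ε ≤ disc (Multiset.map (fun i => ((z i : ℕ) : ℤ)) Finset.univ.val) m with hE
  set f : ℕ → Fin m → ℂ :=
    fun k w => Complex.exp (2 * Real.pi * Complex.I * k * (w : ℕ) / m) with hf
  set gA : ℕ → Fin m → ℝ := fun k w => (f k w).re with hgA
  set gB : ℕ → Fin m → ℝ := fun k w => -(f k w).re with hgB
  set gC : ℕ → Fin m → ℝ := fun k w => (f k w).im with hgC
  set gD : ℕ → Fin m → ℝ := fun k w => -(f k w).im with hgD
  set t : ℝ := n * ε / 2 with hT
  have ht : 0 ≤ t := by positivity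
  set A : ℕ → Finset (Fin n → Fin m) :=
    fun k => Finset.univ.filter fun z => t ≤ ∑ j, gA k (z j) with hA
  set B : ℕ → Finset (Fin n → Fin m) :=
    fun k => Finset.univ.filter fun z => t ≤ ∑ j, gB k (z j) with hB
  set C : ℕ → Finset (Fin n → Fin m) :=
    fun k => Finset.univ.filter fun z => t ≤ ∑ j, gC k (z j) with hC
  set D : ℕ → Finset (Fin n → Fin m) :=
    fun k => Finset.univ.filter fun z => t ≤ ∑ j, gD k (z j) with hD
  have habs : ∀ k (w : Fin m), ‖f k w‖ = 1 := fun k w => my_abs_exp_one m k w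
  have hsumf : ∀ k, 0 < k → k < m → ∑ w, f k w = 0 := fun k h1 h2 => my_root_sum_zero m k h1 h2
  have hexp : -(t ^ 2) / (2 * n) = -(n * ε ^ 2) / 8 := by
    rw [hT]; field_simp; ring
  have hbound : ∀ k, 0 < k → k < m →
      ((A k).card : ℝ) ≤ (m:ℝ) ^ n * Real.exp (-(n * ε ^ 2) / 8) ∧
      ((B k).card : ℝ) ≤ (m:ℝ) ^ n * Real.exp (-(n * ε ^ 2) / 8) ∧
      ((C k).card : ℝ) ≤ (m:ℝ) ^ n * Real.exp (-(n * ε ^ 2) / 8) ∧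
      ((D k).card : ℝ) ≤ (m:ℝ) ^ n * Real.exp (-(n * ε ^ 2) / 8) := by
    intro k hk0 hkm
    have hre0 : ∑ w, gA k w = 0 := by
      rw [hgA]; simp only []
      rw [show (∑ w, (f k w).re) = (∑ w, f k w).re from (Complex.re_sum _ _).symm,
        hsumf k hk0 hkm]
      rfl
    have him0 : ∑ w, gC k w = 0 := by
      rw [hgC]; simp only []
      rw [show (∑ w, (f k w).im) = (∑ w, f k w).im from (Complex.im_sum _ _).symm,
        hsumf k hk0 hkm]
      rfl
    have hreb : ∀ w, |gA k w| ≤ 1 := fun w =>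
      (Complex.abs_re_le_norm _).trans_eq (habs k w)
    have himb : ∀ w, |gC k w| ≤ 1 := fun w =>
      (Complex.abs_im_le_norm _).trans_eq (habs k w)
    refine ⟨hexp ▸ my_chernoff m n hn (gA k) hreb hre0 t ht,
      hexp ▸ my_chernoff m n hn (gB k) (fun w => by simpa [hgB, hgA] using hreb w)
        (by simpa [hgB, hgA, Finset.sum_neg_distrib] using hre0) t ht,
      hexp ▸ my_chernoff m n hn (gC k) himb him0 t ht,
      hexp ▸ my_chernoff m n hn (gD k) (fun w => by simpa [hgD, hgC] using himb w)
        (by simpa [hgD, hgC, Finset.sum_neg_distrib] using him0) t ht⟩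
  have hsub : E ⊆ (Finset.Ioo 0 m).biUnion fun k => (A k ∪ B k) ∪ (C k ∪ D k) := by
    intro z hz
    rw [hE] at hz
    have hz' := (Finset.mem_filter.1 hz).2
    rw [disc, dif_pos hne, Finset.le_sup'_iff] at hz'
    obtain ⟨k, hk, hks⟩ := hz'
    have hcard : ((Multiset.map (fun i => ((z i : ℕ) : ℤ)) Finset.univ.val).card : ℝ) = n := by
      simp
    have hsum : ((Multiset.map (fun i => ((z i : ℕ) : ℤ)) Finset.univ.val).map
        fun y : ℤ => Complex.exp (2 * Real.pi * Complex.I * (k : ℂ) * (y : ℂ) / (m : ℂ))).sum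
        = ∑ j : Fin n, f k (z j) := by
      rw [Multiset.map_map]
      rw [show (∑ j : Fin n, f k (z j))
          = (Finset.univ.val.map fun j : Fin n => f k (z j)).sum from rfl]
      congr 1
    rw [hsum, hcard] at hks
    set S : ℂ := ∑ j : Fin n, f k (z j) with hS
    have h1 : ε * n ≤ ‖S‖ := (le_div_iff₀ hnR).1 hks
    have h2 : ‖S‖ ≤ |S.re| + |S.im| := Complex.norm_le_abs_re_add_abs_im S
    have h3 : t ≤ |S.re| ∨ t ≤ |S.im| := by
      by_contra h
      push_neg at h
      rw [hT] at h
      obtain ⟨ha, hb⟩ := h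
      nlinarith [h1, h2]
    have hSre : S.re = ∑ j, gA k (z j) := by rw [hS, Complex.re_sum]
    have hSim : S.im = ∑ j, gC k (z j) := by rw [hS, Complex.im_sum]
    apply Finset.mem_biUnion.2
    refine ⟨k, hk, ?_⟩
    have hBsum : ∀ z' : Fin n → Fin m, (∑ j, gB k (z' j)) = -∑ j, gA k (z' j) := by
      intro z'; rw [hgB, hgA]; simp
    have hDsum : ∀ z' : Fin n → Fin m, (∑ j, gD k (z' j)) = -∑ j, gC k (z' j) := by
      intro z'; rw [hgD, hgC]; simp
    rcases h3 with h | h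
    · rcases le_abs.1 h with h' | h'
      · exact Finset.mem_union_left _ (Finset.mem_union_left _
          (Finset.mem_filter.2 ⟨Finset.mem_univ _, by rw [← hSre]; exact h'⟩))
      · exact Finset.mem_union_left _ (Finset.mem_union_right _
          (Finset.mem_filter.2 ⟨Finset.mem_univ _, by rw [hBsum z, ← hSre]; exact h'⟩))
    · rcases le_abs.1 h with h' | h'
      · exact Finset.mem_union_right _ (Finset.mem_union_left _
          (Finset.mem_filter.2 ⟨Finset.mem_univ _, by rw [← hSim]; exact h'⟩))
      · exact Finset.mem_union_right _ (Finset.mem_union_right _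
          (Finset.mem_filter.2 ⟨Finset.mem_univ _, by rw [hDsum z, ← hSim]; exact h'⟩))
  calc (E.card : ℝ)
      ≤ (((Finset.Ioo 0 m).biUnion fun k => (A k ∪ B k) ∪ (C k ∪ D k)).card : ℝ) := by
        exact_mod_cast Finset.card_le_card hsub
    _ ≤ ∑ k ∈ Finset.Ioo 0 m, (((A k ∪ B k) ∪ (C k ∪ D k)).card : ℝ) := by
        exact_mod_cast Finset.card_biUnion_le
    _ ≤ ∑ _k ∈ Finset.Ioo 0 m, (4 * ((m:ℝ) ^ n * Real.exp (-(n * ε ^ 2) / 8))) := by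
        apply Finset.sum_le_sum
        intro k hk
        obtain ⟨hk0, hkm⟩ := Finset.mem_Ioo.mp hk
        obtain ⟨hA', hB', hC', hD'⟩ := hbound k hk0 hkm
        have u1 : (((A k ∪ B k) ∪ (C k ∪ D k)).card : ℝ)
            ≤ ((A k).card : ℝ) + (B k).card + (C k).card + (D k).card := by
          have h1 : ((A k ∪ B k) ∪ (C k ∪ D k)).card
              ≤ (A k).card + (B k).card + ((C k).card + (D k).card) :=
            (Finset.card_union_le _ _).trans
              (Nat.add_le_add (Finset.card_union_le _ _) (Finset.card_union_le _ _))
          have h2 : ((A k ∪ B k) ∪ (C k ∪ D k)).card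
              ≤ (A k).card + (B k).card + (C k).card + (D k).card := by omega
          exact_mod_cast h2
        linarith
    _ = ((Finset.Ioo 0 m).card : ℝ) * (4 * ((m:ℝ) ^ n * Real.exp (-(n * ε ^ 2) / 8))) := by
        rw [Finset.sum_const, nsmul_eq_mul]
    _ ≤ (m : ℝ) * (4 * ((m:ℝ) ^ n * Real.exp (-(n * ε ^ 2) / 8))) := by
        have hcIoo : ((Finset.Ioo 0 m).card : ℝ) ≤ m := by
          rw [Nat.card_Ioo]
          exact_mod_cast Nat.sub_le _ _
        have hpos : (0:ℝ) ≤ 4 * ((m:ℝ) ^ n * Real.exp (-(n * ε ^ 2) / 8)) := by positivity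
        exact mul_le_mul_of_nonneg_right hcIoo hpos
    _ = 4 * m * Real.exp (-(n * ε ^ 2) / 8) * (m : ℝ) ^ n := by ring
end

section
/- Fix an integer m ≥ 2 and a nonempty multiset Z = {z_1, z_2, ..., z_n} of integers. Then disc(Z, m) ≥ 1 − 2π / ⌊(m−1)^{1/n}⌋. -/
lemma abs_exp_I_sub_one_le (θ : ℝ) : ‖Complex.exp (θ * Complex.I) - 1‖ ≤ |θ| := by
  have h1 : ‖Complex.exp (θ * Complex.I) - 1‖ ^ 2 = 2 - 2 * Real.cos θ := by
    rw [Complex.sq_norm, Complex.normSq_apply]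
    simp [Complex.exp_ofReal_mul_I_re, Complex.exp_ofReal_mul_I_im]
    nlinarith [Real.sin_sq_add_cos_sq θ]
  have h2 : ‖Complex.exp (θ * Complex.I) - 1‖ ^ 2 ≤ |θ| ^ 2 := by
    rw [h1, _root_.sq_abs]
    nlinarith [Real.one_sub_sq_div_two_le_cos (x := θ)]
  exact (pow_le_pow_iff_left₀ (norm_nonneg _) (abs_nonneg _) (by norm_num)).mp h2

lemma pigeon (m b : ℕ) (l : List ℤ) (hb : 0 < b) (hbm : b ^ l.length < m) :
    ∃ k ∈ Finset.Ioo 0 m, ∀ z ∈ l, ∃ p : ℤ, |(k : ℝ) * (z : ℝ) / m - p| ≤ 1 / b := by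
  have hm0 : 0 < m := lt_of_le_of_lt (Nat.zero_le _) hbm
  set n := l.length
  have hGlt : ∀ (k : ℕ) (j : Fin n),
      ⌊Int.fract ((k : ℝ) * (l.get j : ℝ) / m) * b⌋₊ < b := by
    intro k j
    have h1 : Int.fract ((k : ℝ) * (l.get j : ℝ) / m) * b < 1 * b := by
      apply mul_lt_mul_of_pos_right (Int.fract_lt_one _) (by exact_mod_cast hb)
    rw [Nat.floor_lt (mul_nonneg (Int.fract_nonneg _) (by positivity))]
    simpa using h1
  set G : ℕ → (Fin n → Fin b) := fun k j =>
    ⟨⌊Int.fract ((k : ℝ) * (l.get j : ℝ) / m) * b⌋₊, hGlt k j⟩ with hG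
  have hcard : (Finset.univ : Finset (Fin n → Fin b)).card < (Finset.range m).card := by
    rw [Finset.card_univ, Finset.card_range]
    simpa [Fintype.card_fun] using hbm
  obtain ⟨x, hx, y, hy, hxy, hGxy⟩ :=
    Finset.exists_ne_map_eq_of_card_lt_of_maps_to hcard
      (fun k _ => Finset.mem_univ (G k))
  wlog hlt : x < y generalizing x y
  · exact this y hy x hx hxy.symm hGxy.symm (by omega)
  refine ⟨y - x, Finset.mem_Ioo.mpr ⟨by omega, by have := Finset.mem_range.mp hy; omega⟩, ?_⟩
  intro z hz
  obtain ⟨j, hj⟩ := List.mem_iff_get.mp hz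
  have hkey : G x j = G y j := congrFun hGxy j
  rw [hG] at hkey
  simp only [Fin.mk.injEq] at hkey
  set u := Int.fract ((x : ℝ) * (l.get j : ℝ) / m) with hu
  set v := Int.fract ((y : ℝ) * (l.get j : ℝ) / m) with hv
  have huv : |v - u| ≤ 1 / b := by
    have h1 : (⌊u * b⌋₊ : ℝ) ≤ u * b := Nat.floor_le (mul_nonneg (Int.fract_nonneg _) (by positivity))
    have h2 : u * b < ⌊u * b⌋₊ + 1 := Nat.lt_floor_add_one _
    have h3 : (⌊v * b⌋₊ : ℝ) ≤ v * b := Nat.floor_le (mul_nonneg (Int.fract_nonneg _) (by positivity))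
    have h4 : v * b < ⌊v * b⌋₊ + 1 := Nat.lt_floor_add_one _
    have hbb : (0 : ℝ) < b := by exact_mod_cast hb
    have hk' : ((⌊u * b⌋₊ : ℕ) : ℝ) = ((⌊v * b⌋₊ : ℕ) : ℝ) := by exact_mod_cast hkey
    have h5 : |v * b - u * b| ≤ 1 := by
      rw [abs_le]; constructor <;> linarith
    rw [le_div_iff₀ hbb]
    calc |v - u| * b = |(v - u) * b| := by rw [abs_mul, abs_of_pos hbb]
      _ = |v * b - u * b| := by ring_nf
      _ ≤ 1 := h5
  refine ⟨⌊(y : ℝ) * (l.get j : ℝ) / m⌋ - ⌊(x : ℝ) * (l.get j : ℝ) / m⌋, ?_⟩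
  have hxy' : x ≤ y := hlt.le
  have hcast : ((y - x : ℕ) : ℝ) = (y : ℝ) - x := by
    push_cast [Nat.cast_sub hxy']; ring
  have hm0' : (m : ℝ) ≠ 0 := by positivity
  have hexp : ((y - x : ℕ) : ℝ) * (z : ℝ) / m
      - ((⌊(y : ℝ) * (l.get j : ℝ) / m⌋ - ⌊(x : ℝ) * (l.get j : ℝ) / m⌋ : ℤ) : ℝ)
      = v - u := by
    rw [hv, hu, Int.fract, Int.fract, hcast, ← hj]
    push_cast
    field_simp
    ring
  rw [hexp]
  exact huv

theorem stmt_8 (m : ℕ) (hm : 2 ≤ m) (Z : Multiset ℤ) (hZ : Z ≠ 0) :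
    1 - 2 * Real.pi / (⌊((m : ℝ) - 1) ^ ((1 : ℝ) / (Multiset.card Z : ℝ))⌋₊ : ℝ) ≤ disc Z m := by
  have hn0 : 0 < Multiset.card Z := Multiset.card_pos.mpr hZ
  set n := Multiset.card Z with hndef
  set b := ⌊((m : ℝ) - 1) ^ ((1 : ℝ) / (n : ℝ))⌋₊ with hbdef
  have hm1 : (1 : ℝ) ≤ (m : ℝ) - 1 := by
    have : (2 : ℝ) ≤ m := by exact_mod_cast hm
    linarith
  have hrnn : (0 : ℝ) ≤ ((m : ℝ) - 1) ^ ((1 : ℝ) / (n : ℝ)) :=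
    Real.rpow_nonneg (by linarith) _
  have hb0 : 0 < b := by
    rw [hbdef]
    apply Nat.le_floor
    rw [Nat.cast_one]
    exact Real.one_le_rpow hm1 (by positivity)
  have hbb : (0 : ℝ) < b := by exact_mod_cast hb0
  have hbn : (b : ℝ) ^ n ≤ (m : ℝ) - 1 := by
    calc (b : ℝ) ^ n ≤ (((m : ℝ) - 1) ^ ((1 : ℝ) / (n : ℝ))) ^ n :=
          pow_le_pow_left₀ (by positivity) (Nat.floor_le hrnn) n
      _ = (m : ℝ) - 1 := by
          rw [← Real.rpow_natCast (((m : ℝ) - 1) ^ ((1 : ℝ) / (n : ℝ))) n,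
            ← Real.rpow_mul (by linarith), one_div,
            inv_mul_cancel₀ (by positivity), Real.rpow_one]
  have hbm : b ^ n < m := by
    have : ((b ^ n : ℕ) : ℝ) < m := by push_cast; linarith
    exact_mod_cast this
  have hlen : Z.toList.length = n := Multiset.length_toList Z
  obtain ⟨k, hk, hkprop⟩ := pigeon m b Z.toList hb0 (by rw [hlen]; exact hbm)
  set f : ℤ → ℂ := fun z =>
    Complex.exp (2 * Real.pi * Complex.I * (k : ℂ) * (z : ℂ) / (m : ℂ)) with hf
  have hm0' : (m : ℝ) ≠ 0 := by positivity
  have hterm : ∀ z ∈ Z, ‖f z - 1‖ ≤ 2 * Real.pi / b := by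
    intro z hz
    obtain ⟨p, hp⟩ := hkprop z (Multiset.mem_toList.mpr hz)
    have heq : (2 * Real.pi * Complex.I * (k : ℂ) * (z : ℂ) / (m : ℂ))
        = ((2 * Real.pi * ((k : ℝ) * (z : ℝ) / m - p) : ℝ) : ℂ) * Complex.I
          + (p : ℤ) * (2 * Real.pi * Complex.I) := by
      push_cast
      have : (m : ℂ) ≠ 0 := by exact_mod_cast Nat.cast_ne_zero.mpr (show m ≠ 0 by omega)
      field_simp
      ring
    rw [hf]
    simp only
    rw [heq, Complex.exp_add, Complex.exp_int_mul_two_pi_mul_I, mul_one]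
    calc ‖Complex.exp (((2 * Real.pi * ((k : ℝ) * (z : ℝ) / m - p) : ℝ) : ℂ) * Complex.I) - 1‖
        ≤ |2 * Real.pi * ((k : ℝ) * (z : ℝ) / m - p)| := abs_exp_I_sub_one_le _
      _ = 2 * Real.pi * |(k : ℝ) * (z : ℝ) / m - p| := by
          rw [abs_mul, abs_of_pos Real.two_pi_pos]
      _ ≤ 2 * Real.pi * (1 / b) := by
          exact mul_le_mul_of_nonneg_left hp (by positivity)
      _ = 2 * Real.pi / b := by ring
  have hsplit : (Z.map f).sum = (n : ℂ) + (Z.map fun z => f z - 1).sum := by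
    have h1 : Z.map f = Z.map (fun z => 1 + (f z - 1)) := by simp
    rw [h1, Multiset.sum_map_add]
    simp [hndef]
  have h2 : ‖(Z.map fun z => f z - 1).sum‖ ≤ (n : ℝ) * (2 * Real.pi / b) := by
    calc ‖(Z.map fun z => f z - 1).sum‖
        ≤ ((Z.map fun z => f z - 1).map fun x => ‖x‖).sum := by
          exact norm_multiset_sum_le (Z.map fun z => f z - 1)
      _ = (Z.map fun z => ‖f z - 1‖).sum := by rw [Multiset.map_map]; rfl
      _ ≤ (Z.map fun _ => 2 * Real.pi / b).sum := by
          apply Multiset.sum_map_le_sum_map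
          intro z hz; exact hterm z hz
      _ = (n : ℝ) * (2 * Real.pi / b) := by
          rw [Multiset.map_const', Multiset.sum_replicate, nsmul_eq_mul, hndef]
  have h3 : (n : ℝ) ≤ ‖(Z.map f).sum‖ + ‖(Z.map fun z => f z - 1).sum‖ := by
    have heq2 : ((n : ℝ) : ℂ) = (Z.map f).sum + (-(Z.map fun z => f z - 1).sum) := by
      rw [hsplit]; push_cast; ring
    calc (n : ℝ) = ‖((n : ℝ) : ℂ)‖ := by
          rw [Complex.norm_real, Real.norm_eq_abs, abs_of_nonneg (by positivity)]
      _ ≤ _ := by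
          rw [heq2]
          refine le_trans (norm_add_le _ _) ?_
          rw [norm_neg]
  have hsum : (n : ℝ) * (1 - 2 * Real.pi / b) ≤ ‖(Z.map f).sum‖ := by
    have hr : (n : ℝ) * (1 - 2 * Real.pi / b) = n - n * (2 * Real.pi / b) := by ring
    linarith
  rw [disc, dif_pos ⟨k, hk⟩]
  refine le_trans ?_ (Finset.le_sup' _ hk)
  rw [le_div_iff₀ (by exact_mod_cast hn0 : (0 : ℝ) < (n : ℝ))]
  calc (1 - 2 * Real.pi / b) * n = (n : ℝ) * (1 - 2 * Real.pi / b) := by ring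
    _ ≤ _ := hsum
end

section
/- For every real ε with 0 < ε ≤ 1 there exists a constant C_ε ≥ 1 such that for every integer m ≥ 2 there is a nonempty set Z ⊆ {0, 1, ..., m−1} with disc(Z, m) ≤ ε and |Z| ≤ C_ε · log₂ m. -/
open Finset Real

noncomputable def eZ (m k x : ℕ) : ℂ :=
  Complex.exp (2 * Real.pi * Complex.I * (k : ℂ) * (x : ℂ) / (m : ℂ))

lemma eZ_eq_pow (m k x : ℕ) :
    eZ m k x = Complex.exp (2 * Real.pi * Complex.I * k / m) ^ x := by
  rw [eZ, ← Complex.exp_nat_mul]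
  ring_nf

lemma eZ_sum_zero {m k : ℕ} (hk0 : 0 < k) (hkm : k < m) :
    ∑ x ∈ range m, eZ m k x = 0 := by
  have hm : 0 < m := lt_trans hk0 hkm
  have hmC : (m : ℂ) ≠ 0 := by exact_mod_cast hm.ne'
  set ζ : ℂ := Complex.exp (2 * Real.pi * Complex.I * k / m) with hζ
  have hζm : ζ ^ m = 1 := by
    rw [hζ, ← Complex.exp_nat_mul]
    have : (m : ℂ) * (2 * Real.pi * Complex.I * k / m) = k * (2 * Real.pi * Complex.I) := by
      field_simp
    rw [this, Complex.exp_nat_mul, Complex.exp_two_pi_mul_I, one_pow]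
  have hζ1 : ζ ≠ 1 := by
    rw [hζ, Ne, Complex.exp_eq_one_iff]
    rintro ⟨n, hn⟩
    have h2πI : (2 * (Real.pi:ℂ) * Complex.I) ≠ 0 := by
      simp [Real.pi_ne_zero, Complex.I_ne_zero]
    have hkC : (k : ℂ) = n * m := by
      field_simp at hn
      have h2 : 2*(Real.pi:ℂ)*Complex.I * k = 2*Real.pi*Complex.I*((n:ℂ)*m) := by
        linear_combination (2*(Real.pi:ℂ)*Complex.I) * hn
      exact mul_left_cancel₀ h2πI h2
    have hkZ : (k : ℤ) = n * m := by exact_mod_cast hkC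
    have hdvd : (m:ℤ) ∣ (k:ℤ) := ⟨n, by linarith⟩
    have : m ∣ k := by exact_mod_cast hdvd
    exact absurd (Nat.le_of_dvd hk0 this) (not_le.2 hkm)
  have hgeom := geom_sum_eq hζ1 m
  calc ∑ x ∈ range m, eZ m k x = ∑ x ∈ range m, ζ ^ x := by
        refine Finset.sum_congr rfl fun x _ => eZ_eq_pow m k x
    _ = (ζ ^ m - 1) / (ζ - 1) := hgeom
    _ = 0 := by rw [hζm]; simp

lemma eZ_re (m k x : ℕ) : (eZ m k x).re = Real.cos (2 * Real.pi * k * x / m) := by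
  have h : (2 * Real.pi * Complex.I * (k : ℂ) * (x : ℂ) / (m : ℂ))
      = ((2 * Real.pi * k * x / m : ℝ) : ℂ) * Complex.I := by push_cast; ring
  rw [eZ, h, Complex.exp_ofReal_mul_I_re]

lemma eZ_im (m k x : ℕ) : (eZ m k x).im = Real.sin (2 * Real.pi * k * x / m) := by
  have h : (2 * Real.pi * Complex.I * (k : ℂ) * (x : ℂ) / (m : ℂ))
      = ((2 * Real.pi * k * x / m : ℝ) : ℂ) * Complex.I := by push_cast; ring
  rw [eZ, h, Complex.exp_ofReal_mul_I_im]

lemma exp_quad {u : ℝ} (hu : |u| ≤ 1) : Real.exp u ≤ 1 + u + u^2 := by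
  have h := Real.exp_bound hu (n := 2) (by norm_num)
  have hs : ∑ m ∈ Finset.range 2, u ^ m / m.factorial = 1 + u := by
    simp [Finset.sum_range_succ]
  rw [hs] at h
  have h2 : |u|^2 = u^2 := sq_abs u
  have := abs_le.1 h
  norm_num [h2] at this
  nlinarith [this.2]

lemma sum_exp_le (m : ℕ) (g : ℕ → ℝ) (hg1 : ∀ x, |g x| ≤ 1)
    (hg0 : ∑ x ∈ range m, g x = 0) (lam : ℝ) (hlam0 : 0 ≤ lam) (hlam1 : lam ≤ 1) :
    ∑ x : Fin m, Real.exp (lam * g x) ≤ m * (1 + lam^2) := by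
  have key : ∀ x : ℕ, Real.exp (lam * g x) ≤ 1 + lam * g x + lam^2 := by
    intro x
    have habs : |lam * g x| ≤ 1 := by
      rw [abs_mul, abs_of_nonneg hlam0]
      calc lam * |g x| ≤ 1 * 1 := by
            apply mul_le_mul hlam1 (hg1 x) (abs_nonneg _) zero_le_one
        _ = 1 := one_mul 1
    calc Real.exp (lam * g x) ≤ 1 + lam * g x + (lam * g x)^2 := exp_quad habs
      _ ≤ 1 + lam * g x + lam^2 := by
          have : (lam * g x)^2 ≤ lam^2 * 1 := by
            rw [mul_pow]
            apply mul_le_mul_of_nonneg_left _ (sq_nonneg lam)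
            calc (g x)^2 = |g x|^2 := (sq_abs _).symm
              _ ≤ 1^2 := by apply pow_le_pow_left₀ (abs_nonneg _) (hg1 x)
              _ = 1 := one_pow 2
          linarith
  calc ∑ x : Fin m, Real.exp (lam * g x) ≤ ∑ x : Fin m, (1 + lam * g (x:ℕ) + lam^2) :=
        Finset.sum_le_sum fun x _ => key x
    _ = m * (1 + lam^2) + lam * ∑ x : Fin m, g (x:ℕ) := by
        rw [Finset.sum_add_distrib, Finset.sum_add_distrib, Finset.mul_sum]
        simp [Finset.card_univ]
        ring
    _ = m * (1 + lam^2) := by rw [Fin.sum_univ_eq_sum_range, hg0]; ring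

lemma sum_fun_prod (m n : ℕ) (h : ℕ → ℝ) :
    ∑ f : Fin n → Fin m, ∏ j, h (f j) = (∑ x : Fin m, h (x:ℕ)) ^ n := by
  classical
  have := Finset.prod_univ_sum (fun _ : Fin n => (Finset.univ : Finset (Fin m)))
    (fun _ x => h (x : ℕ))
  rw [Fintype.piFinset_univ] at this
  rw [← this, Finset.prod_const, Finset.card_univ, Fintype.card_fin]

lemma chernoff_count (m n : ℕ) (g : ℕ → ℝ) (lam a : ℝ) (hlam0 : 0 ≤ lam)
    (hsum : ∑ x : Fin m, Real.exp (lam * g x) ≤ m * (1 + lam^2)) :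
    ((Finset.univ.filter fun f : Fin n → Fin m => a ≤ ∑ j, g (f j)).card : ℝ)
      ≤ Real.exp (-(lam * a)) * (m * (1 + lam^2))^n := by
  classical
  have step1 : ((Finset.univ.filter fun f : Fin n → Fin m => a ≤ ∑ j, g (f j)).card : ℝ)
      ≤ ∑ f : Fin n → Fin m, Real.exp (lam * (∑ j, g (f j)) - lam * a) := by
    rw [Finset.card_eq_sum_ones, Nat.cast_sum]
    calc (∑ _f ∈ Finset.univ.filter fun f : Fin n → Fin m => a ≤ ∑ j, g (f j), ((1:ℕ):ℝ))
        ≤ ∑ f ∈ Finset.univ.filter fun f : Fin n → Fin m => a ≤ ∑ j, g (f j),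
            Real.exp (lam * (∑ j, g (f j)) - lam * a) := by
          apply Finset.sum_le_sum
          intro f hf
          rw [Finset.mem_filter] at hf
          have : 0 ≤ lam * (∑ j, g (f j)) - lam * a := by
            have := mul_le_mul_of_nonneg_left hf.2 hlam0
            linarith
          simpa using Real.one_le_exp this
      _ ≤ ∑ f : Fin n → Fin m, Real.exp (lam * (∑ j, g (f j)) - lam * a) := by
          apply Finset.sum_le_sum_of_subset_of_nonneg (Finset.filter_subset _ _)
          intro f _ _; positivity
  have step2 : ∑ f : Fin n → Fin m, Real.exp (lam * (∑ j, g (f j)) - lam * a)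
      = Real.exp (-(lam * a)) * (∑ x : Fin m, Real.exp (lam * g x)) ^ n := by
    rw [← sum_fun_prod m n (fun x => Real.exp (lam * g x)), Finset.mul_sum]
    apply Finset.sum_congr rfl
    intro f _
    rw [← Real.exp_sum, ← Real.exp_add]
    congr 1
    rw [Finset.mul_sum]
    ring
  calc ((Finset.univ.filter fun f : Fin n → Fin m => a ≤ ∑ j, g (f j)).card : ℝ)
      ≤ Real.exp (-(lam * a)) * (∑ x : Fin m, Real.exp (lam * g x)) ^ n := by
        rw [← step2]; exact step1
    _ ≤ Real.exp (-(lam * a)) * (m * (1 + lam^2))^n := by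
        apply mul_le_mul_of_nonneg_left _ (Real.exp_nonneg _)
        apply pow_le_pow_left₀ (Finset.sum_nonneg fun x _ => Real.exp_nonneg _) hsum

lemma bad_decomp {m n : ℕ} {ε : ℝ} {k : ℕ} (f : Fin n → Fin m)
    (hf : ε * n < ‖∑ j, eZ m k (f j)‖) :
    (ε * n / 2 ≤ ∑ j, Real.cos (2 * Real.pi * k * (f j) / m)) ∨
    (ε * n / 2 ≤ ∑ j, -Real.cos (2 * Real.pi * k * (f j) / m)) ∨
    (ε * n / 2 ≤ ∑ j, Real.sin (2 * Real.pi * k * (f j) / m)) ∨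
    (ε * n / 2 ≤ ∑ j, -Real.sin (2 * Real.pi * k * (f j) / m)) := by
  set S := ∑ j, eZ m k (f j) with hS
  have hRe : S.re = ∑ j, Real.cos (2 * Real.pi * k * (f j) / m) := by
    rw [hS, Complex.re_sum]
    exact Finset.sum_congr rfl fun j _ => eZ_re m k (f j)
  have hIm : S.im = ∑ j, Real.sin (2 * Real.pi * k * (f j) / m) := by
    rw [hS, Complex.im_sum]
    exact Finset.sum_congr rfl fun j _ => eZ_im m k (f j)
  have habs : ‖S‖ ≤ |S.re| + |S.im| := Complex.norm_le_abs_re_add_abs_im S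
  have key : ε * n / 2 ≤ |S.re| ∨ ε * n / 2 ≤ |S.im| := by
    by_contra hcon
    push_neg at hcon
    linarith [hcon.1, hcon.2]
  rcases key with h | h
  · rcases le_abs.mp h with h' | h'
    · exact Or.inl (hRe ▸ h')
    · refine Or.inr (Or.inl ?_)
      rw [Finset.sum_neg_distrib, ← hRe]
      exact h'
  · rcases le_abs.mp h with h' | h'
    · exact Or.inr (Or.inr (Or.inl (hIm ▸ h')))
    · refine Or.inr (Or.inr (Or.inr ?_))
      rw [Finset.sum_neg_distrib, ← hIm]
      exact h'

lemma badk_card (m n : ℕ) (ε : ℝ) (hε0 : 0 < ε) (hε1 : ε ≤ 1) (k : ℕ)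
    (hk0 : 0 < k) (hkm : k < m) :
    ((Finset.univ.filter fun f : Fin n → Fin m =>
        ε * n < ‖∑ j, eZ m k (f j)‖).card : ℝ)
      ≤ 4 * (m:ℝ)^n * Real.exp (-(ε^2 * n / 16)) := by
  classical
  set lam : ℝ := ε / 4 with hlam
  set a : ℝ := ε * n / 2 with ha
  have hlam0 : 0 ≤ lam := by positivity
  have hlam1 : lam ≤ 1 := by rw [hlam]; linarith
  set c : ℕ → ℝ := fun x => Real.cos (2 * Real.pi * k * x / m) with hc
  set s : ℕ → ℝ := fun x => Real.sin (2 * Real.pi * k * x / m) with hs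
  have hsumE := eZ_sum_zero hk0 hkm
  have hc0 : ∑ x ∈ range m, c x = 0 := by
    have : (∑ x ∈ range m, eZ m k x).re = 0 := by rw [hsumE]; rfl
    rw [Complex.re_sum] at this
    rw [← this]
    exact Finset.sum_congr rfl fun x _ => (eZ_re m k x).symm
  have hs0 : ∑ x ∈ range m, s x = 0 := by
    have : (∑ x ∈ range m, eZ m k x).im = 0 := by rw [hsumE]; rfl
    rw [Complex.im_sum] at this
    rw [← this]
    exact Finset.sum_congr rfl fun x _ => (eZ_im m k x).symm
  have hc1 : ∀ x, |c x| ≤ 1 := fun x => Real.abs_cos_le_one _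
  have hs1 : ∀ x, |s x| ≤ 1 := fun x => Real.abs_sin_le_one _
  have hnc0 : ∑ x ∈ range m, (-c x) = 0 := by rw [Finset.sum_neg_distrib, hc0, neg_zero]
  have hns0 : ∑ x ∈ range m, (-s x) = 0 := by rw [Finset.sum_neg_distrib, hs0, neg_zero]
  have hnc1 : ∀ x, |(-c x)| ≤ 1 := fun x => by rw [abs_neg]; exact hc1 x
  have hns1 : ∀ x, |(-s x)| ≤ 1 := fun x => by rw [abs_neg]; exact hs1 x
  set F : (ℕ → ℝ) → Finset (Fin n → Fin m) :=
    fun g => Finset.univ.filter fun f => a ≤ ∑ j, g (f j) with hF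
  have hcover : (Finset.univ.filter fun f : Fin n → Fin m =>
      ε * n < ‖∑ j, eZ m k (f j)‖)
      ⊆ (F c ∪ F (fun x => -c x)) ∪ (F s ∪ F (fun x => -s x)) := by
    intro f hf
    rw [Finset.mem_filter] at hf
    rcases bad_decomp f hf.2 with h | h | h | h
    · exact Finset.mem_union_left _ (Finset.mem_union_left _
        (Finset.mem_filter.mpr ⟨Finset.mem_univ _, h⟩))
    · exact Finset.mem_union_left _ (Finset.mem_union_right _
        (Finset.mem_filter.mpr ⟨Finset.mem_univ _, h⟩))
    · exact Finset.mem_union_right _ (Finset.mem_union_left _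
        (Finset.mem_filter.mpr ⟨Finset.mem_univ _, h⟩))
    · exact Finset.mem_union_right _ (Finset.mem_union_right _
        (Finset.mem_filter.mpr ⟨Finset.mem_univ _, h⟩))
  have hbound : ∀ g : ℕ → ℝ, (∀ x, |g x| ≤ 1) → (∑ x ∈ range m, g x = 0) →
      ((F g).card : ℝ) ≤ (m:ℝ)^n * Real.exp (-(ε^2 * n / 16)) := by
    intro g hg1 hg0
    have hch := chernoff_count m n g lam a hlam0 (sum_exp_le m g hg1 hg0 lam hlam0 hlam1)
    refine le_trans hch ?_
    have h1 : ((m:ℝ) * (1 + lam^2))^n = (m:ℝ)^n * (1 + lam^2)^n := mul_pow _ _ _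
    have h2 : (1 + lam^2)^n ≤ Real.exp (lam^2 * n) := by
      calc (1 + lam^2)^n ≤ (Real.exp (lam^2))^n := by
            apply pow_le_pow_left₀ (by positivity)
            linarith [Real.add_one_le_exp (lam^2)]
        _ = Real.exp (lam^2 * n) := by
            rw [← Real.exp_nat_mul]; ring_nf
    calc Real.exp (-(lam * a)) * ((m:ℝ) * (1 + lam^2))^n
        ≤ Real.exp (-(lam * a)) * ((m:ℝ)^n * Real.exp (lam^2 * n)) := by
          rw [h1]
          apply mul_le_mul_of_nonneg_left _ (Real.exp_nonneg _)
          apply mul_le_mul_of_nonneg_left h2 (by positivity)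
      _ = (m:ℝ)^n * Real.exp (-(ε^2 * n / 16)) := by
          rw [hlam, ha]
          rw [mul_comm (Real.exp _), mul_assoc, ← Real.exp_add]
          congr 2
          ring
  calc ((Finset.univ.filter fun f : Fin n → Fin m =>
        ε * n < ‖∑ j, eZ m k (f j)‖).card : ℝ)
      ≤ (((F c ∪ F (fun x => -c x)) ∪ (F s ∪ F (fun x => -s x))).card : ℝ) := by
        exact_mod_cast Finset.card_le_card hcover
    _ ≤ ((F c).card : ℝ) + ((F (fun x => -c x)).card) + (((F s).card) + ((F (fun x => -s x)).card)) := by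
        have t1 := Finset.card_union_le (F c ∪ F (fun x => -c x)) (F s ∪ F (fun x => -s x))
        have t2 := Finset.card_union_le (F c) (F (fun x => -c x))
        have t3 := Finset.card_union_le (F s) (F (fun x => -s x))
        have := le_trans t1 (add_le_add t2 t3)
        exact_mod_cast this
    _ ≤ 4 * ((m:ℝ)^n * Real.exp (-(ε^2 * n / 16))) := by
        have b1 := hbound c hc1 hc0
        have b2 := hbound (fun x => -c x) hnc1 hnc0
        have b3 := hbound s hs1 hs0
        have b4 := hbound (fun x => -s x) hns1 hns0
        linarith
    _ = 4 * (m:ℝ)^n * Real.exp (-(ε^2 * n / 16)) := by ring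

lemma card_eq_filter' (m n : ℕ) (i j : Fin n) (hij : i ≠ j) (hn : 1 ≤ n) :
    ((Finset.univ.filter fun f : Fin n → Fin m => f i = f j).card : ℝ) * m ≤ (m:ℝ)^n := by
  classical
  have key : (Finset.univ.filter fun f : Fin n → Fin m => f i = f j).card
      ≤ Fintype.card ({x : Fin n // x ≠ j} → Fin m) := by
    rw [← Finset.card_univ]
    apply Finset.card_le_card_of_injOn (fun f => fun x => f x.1) (fun _ _ => Finset.mem_univ _)
    intro f hf g hg hfg
    rw [Finset.mem_coe, Finset.mem_filter] at hf hg
    funext x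
    by_cases hx : x = j
    · subst hx
      rw [← hf.2, ← hg.2]
      exact congrFun hfg ⟨i, hij⟩
    · exact congrFun hfg ⟨x, hx⟩
  have hcard : Fintype.card ({x : Fin n // x ≠ j} → Fin m) = m ^ (n - 1) := by
    rw [Fintype.card_fun, Fintype.card_fin]
    congr 1
    have : Fintype.card {x : Fin n // x ≠ j} = Fintype.card (Fin n) - 1 := by
      simp [Fintype.card_subtype_compl, Fintype.card_subtype_eq]
    rw [this, Fintype.card_fin]
  rw [hcard] at key
  have hkey : ((Finset.univ.filter fun f : Fin n → Fin m => f i = f j).card : ℝ) ≤ (m:ℝ)^(n-1) := by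
    exact_mod_cast key
  calc ((Finset.univ.filter fun f : Fin n → Fin m => f i = f j).card : ℝ) * m
      ≤ (m:ℝ)^(n-1) * m := by
        apply mul_le_mul_of_nonneg_right hkey (by positivity)
    _ = (m:ℝ)^n := by
        rw [← pow_succ]
        rw [Nat.sub_add_cancel hn]

lemma noninj_card (m n : ℕ) (hn : 1 ≤ n) (hm : 0 < m) :
    ((Finset.univ.filter fun f : Fin n → Fin m => ¬ Function.Injective f).card : ℝ)
      ≤ (n:ℝ)^2 * (m:ℝ)^n / m := by
  classical
  have hmR : (0:ℝ) < m := by exact_mod_cast hm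
  rw [le_div_iff₀ hmR]
  have hsub : (Finset.univ.filter fun f : Fin n → Fin m => ¬ Function.Injective f)
      ⊆ Finset.univ.offDiag.biUnion
        (fun p => Finset.univ.filter fun f : Fin n → Fin m => f p.1 = f p.2) := by
    intro f hf
    rw [Finset.mem_filter] at hf
    obtain ⟨a, b, hab, hne⟩ := Function.not_injective_iff.mp hf.2
    apply Finset.mem_biUnion.mpr
    exact ⟨(a, b), Finset.mem_offDiag.mpr ⟨Finset.mem_univ _, Finset.mem_univ _, hne⟩,
      Finset.mem_filter.mpr ⟨Finset.mem_univ _, hab⟩⟩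
  calc ((Finset.univ.filter fun f : Fin n → Fin m => ¬ Function.Injective f).card : ℝ) * m
      ≤ ((Finset.univ.offDiag.biUnion
          (fun p => Finset.univ.filter fun f : Fin n → Fin m => f p.1 = f p.2)).card : ℝ) * m := by
        apply mul_le_mul_of_nonneg_right _ hmR.le
        exact_mod_cast Finset.card_le_card hsub
    _ ≤ (∑ p ∈ Finset.univ.offDiag,
          ((Finset.univ.filter fun f : Fin n → Fin m => f p.1 = f p.2).card : ℝ)) * m := by
        apply mul_le_mul_of_nonneg_right _ hmR.le
        exact_mod_cast Finset.card_biUnion_le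
    _ = ∑ p ∈ Finset.univ.offDiag,
          ((Finset.univ.filter fun f : Fin n → Fin m => f p.1 = f p.2).card : ℝ) * m := by
        rw [Finset.sum_mul]
    _ ≤ ∑ _p ∈ (Finset.univ : Finset (Fin n)).offDiag, (m:ℝ)^n := by
        apply Finset.sum_le_sum
        intro p hp
        have hne := (Finset.mem_offDiag.mp hp).2.2
        exact card_eq_filter' m n p.1 p.2 hne hn
    _ = ((Finset.univ : Finset (Fin n)).offDiag.card : ℝ) * (m:ℝ)^n := by
        rw [Finset.sum_const, nsmul_eq_mul]
    _ ≤ (n:ℝ)^2 * (m:ℝ)^n := by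
        apply mul_le_mul_of_nonneg_right _ (by positivity)
        have hoff : (Finset.univ : Finset (Fin n)).offDiag.card = n * n - n := by
          rw [Finset.offDiag_card, Finset.card_univ, Fintype.card_fin]
        rw [hoff]
        have h1 : n * n - n ≤ n * n := Nat.sub_le _ _
        calc ((n * n - n : ℕ) : ℝ) ≤ ((n * n : ℕ) : ℝ) := by exact_mod_cast h1
          _ = (n:ℝ)^2 := by push_cast; ring

lemma exists_good (m n : ℕ) (hm : 2 ≤ m) (hn : 1 ≤ n) (ε : ℝ) (hε0 : 0 < ε) (hε1 : ε ≤ 1)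
    (h1 : (8:ℝ) * m ≤ Real.exp (ε^2 * n / 16))
    (h2 : 2 * (n:ℝ)^2 < m) :
    ∃ f : Fin n → Fin m, Function.Injective f ∧
      ∀ k ∈ Finset.Ioo 0 m, ‖∑ j, eZ m k (f j)‖ ≤ ε * n := by
  classical
  have hm0 : 0 < m := by omega
  have hmR : (0:ℝ) < m := by exact_mod_cast hm0
  set Bad : Finset (Fin n → Fin m) :=
    ((Finset.Ioo 0 m).biUnion fun k =>
      Finset.univ.filter fun f => ε * n < ‖∑ j, eZ m k (f j)‖)
    ∪ (Finset.univ.filter fun f => ¬ Function.Injective f) with hBad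
  have hcard : (Bad.card : ℝ) < (m:ℝ)^n := by
    have hb1 : (((Finset.Ioo 0 m).biUnion fun k =>
        Finset.univ.filter fun f : Fin n → Fin m =>
          ε * n < ‖∑ j, eZ m k (f j)‖).card : ℝ)
        ≤ (m:ℝ)^n / 2 := by
      calc (((Finset.Ioo 0 m).biUnion fun k =>
          Finset.univ.filter fun f : Fin n → Fin m =>
            ε * n < ‖∑ j, eZ m k (f j)‖).card : ℝ)
          ≤ ∑ k ∈ Finset.Ioo 0 m, ((Finset.univ.filter fun f : Fin n → Fin m =>
              ε * n < ‖∑ j, eZ m k (f j)‖).card : ℝ) := by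
            exact_mod_cast Finset.card_biUnion_le
        _ ≤ ∑ _k ∈ Finset.Ioo 0 m, 4 * (m:ℝ)^n * Real.exp (-(ε^2 * n / 16)) := by
            apply Finset.sum_le_sum
            intro k hk
            rw [Finset.mem_Ioo] at hk
            exact badk_card m n ε hε0 hε1 k hk.1 hk.2
        _ = ((Finset.Ioo 0 m).card : ℝ) * (4 * (m:ℝ)^n * Real.exp (-(ε^2 * n / 16))) := by
            rw [Finset.sum_const, nsmul_eq_mul]
        _ ≤ (m:ℝ) * (4 * (m:ℝ)^n * Real.exp (-(ε^2 * n / 16))) := by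
            apply mul_le_mul_of_nonneg_right _ (by positivity)
            have hIoo : (Finset.Ioo 0 m).card = m - 1 := by
              simp [Nat.card_Ioo]
            rw [hIoo]
            have : m - 1 ≤ m := Nat.sub_le _ _
            exact_mod_cast this
        _ ≤ (m:ℝ)^n / 2 := by
            have hexp : Real.exp (-(ε^2 * n / 16)) ≤ 1 / (8 * m) := by
              rw [Real.exp_neg]
              rw [inv_eq_one_div]
              apply div_le_div_of_nonneg_left one_pos.le (by positivity) h1
            calc (m:ℝ) * (4 * (m:ℝ)^n * Real.exp (-(ε^2 * n / 16)))
                ≤ (m:ℝ) * (4 * (m:ℝ)^n * (1 / (8 * m))) := by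
                  apply mul_le_mul_of_nonneg_left _ hmR.le
                  apply mul_le_mul_of_nonneg_left hexp (by positivity)
              _ = (m:ℝ)^n / 2 := by field_simp; ring
    have hb2 : ((Finset.univ.filter fun f : Fin n → Fin m =>
        ¬ Function.Injective f).card : ℝ) < (m:ℝ)^n / 2 := by
      calc ((Finset.univ.filter fun f : Fin n → Fin m => ¬ Function.Injective f).card : ℝ)
          ≤ (n:ℝ)^2 * (m:ℝ)^n / m := noninj_card m n hn hm0
        _ < (m:ℝ)^n / 2 := by
            rw [div_lt_div_iff₀ hmR (by norm_num : (0:ℝ) < 2)]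
            have hpow : (0:ℝ) < (m:ℝ)^n := by positivity
            nlinarith
    have hun : (Bad.card : ℝ) ≤ (((Finset.Ioo 0 m).biUnion fun k =>
        Finset.univ.filter fun f : Fin n → Fin m =>
          ε * n < ‖∑ j, eZ m k (f j)‖).card : ℝ)
        + ((Finset.univ.filter fun f : Fin n → Fin m => ¬ Function.Injective f).card : ℝ) := by
      rw [hBad]
      exact_mod_cast Finset.card_union_le _ _
    linarith
  have hex : ∃ f : Fin n → Fin m, f ∉ Bad := by
    by_contra hcon
    push_neg at hcon
    have hsub : (Finset.univ : Finset (Fin n → Fin m)) ⊆ Bad := fun f _ => hcon f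
    have hle := Finset.card_le_card hsub
    rw [Finset.card_univ] at hle
    have hcf : Fintype.card (Fin n → Fin m) = m ^ n := by
      rw [Fintype.card_fun, Fintype.card_fin, Fintype.card_fin]
    rw [hcf] at hle
    have : ((m:ℝ))^n ≤ (Bad.card : ℝ) := by exact_mod_cast hle
    linarith
  obtain ⟨f, hf⟩ := hex
  rw [hBad, Finset.mem_union] at hf
  push_neg at hf
  refine ⟨f, ?_, ?_⟩
  · by_contra hni
    exact hf.2 (Finset.mem_filter.mpr ⟨Finset.mem_univ _, hni⟩)
  · intro k hk
    by_contra hlt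
    push_neg at hlt
    exact hf.1 (Finset.mem_biUnion.mpr ⟨k, hk,
      Finset.mem_filter.mpr ⟨Finset.mem_univ _, hlt⟩⟩)

lemma multiset_sum_eq (Z : Finset ℕ) (m k : ℕ) :
    ((Z.val.map fun z : ℕ => (z : ℤ)).map fun z : ℤ =>
      Complex.exp (2 * Real.pi * Complex.I * (k : ℂ) * (z : ℂ) / (m : ℂ))).sum
    = ∑ x ∈ Z, eZ m k x := by
  rw [Multiset.map_map]
  rfl

lemma disc_le_of_bound (Z : Finset ℕ) (m : ℕ) (hm : 2 ≤ m) (hZ : 0 < Z.card) (ε : ℝ)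
    (h : ∀ k ∈ Finset.Ioo 0 m, ‖∑ x ∈ Z, eZ m k x‖ ≤ ε * Z.card) :
    disc (Z.val.map fun z : ℕ => (z : ℤ)) m ≤ ε := by
  have hne : (Finset.Ioo 0 m).Nonempty := ⟨1, Finset.mem_Ioo.mpr ⟨one_pos, by omega⟩⟩
  rw [disc, dif_pos hne]
  apply Finset.sup'_le
  intro k hk
  rw [multiset_sum_eq, Multiset.card_map,
    show (Multiset.card Z.val) = Z.card from rfl]
  have hcard : (0:ℝ) < Z.card := by exact_mod_cast hZ
  rw [div_le_iff₀ hcard]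
  exact h k hk

lemma logb_ge_one {m : ℕ} (hm : 2 ≤ m) : 1 ≤ Real.logb 2 m := by
  have : (2:ℝ) ≤ m := by exact_mod_cast hm
  calc (1:ℝ) = Real.logb 2 2 := (Real.logb_self_eq_one (by norm_num)).symm
    _ ≤ Real.logb 2 m := Real.logb_le_logb_of_le (by norm_num) (by norm_num) this

lemma log8m_le {m : ℕ} (hm : 2 ≤ m) : Real.log (8 * m) ≤ 3 * Real.logb 2 m := by
  have hmR : (2:ℝ) ≤ m := by exact_mod_cast hm
  have hl2 : Real.log 2 < 0.6931471808 := Real.log_two_lt_d9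
  have hl2' : (0:ℝ) < Real.log 2 := Real.log_pos (by norm_num)
  have hlogb : 1 ≤ Real.logb 2 m := logb_ge_one hm
  have h8 : Real.log (8 * m) = 3 * Real.log 2 + Real.log m := by
    rw [Real.log_mul (by norm_num) (by positivity), show (8:ℝ) = 2^3 by norm_num,
      Real.log_pow]
    push_cast; ring
  have hlm : Real.log m = Real.logb 2 m * Real.log 2 := by
    rw [Real.logb, div_mul_cancel₀]
    exact hl2'.ne'
  rw [h8, hlm]
  nlinarith

lemma logb_le_sqrt_sqrt {m : ℕ} (hm : 2 ≤ m) :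
    Real.logb 2 m ≤ 6 * Real.sqrt (Real.sqrt m) := by
  have hmR : (2:ℝ) ≤ m := by exact_mod_cast hm
  have hm0 : (0:ℝ) < m := by linarith
  have h1 : Real.log m = 4 * Real.log (Real.sqrt (Real.sqrt m)) := by
    rw [Real.log_sqrt (Real.sqrt_nonneg _), Real.log_sqrt hm0.le]
    ring
  have h2 : Real.log (Real.sqrt (Real.sqrt m)) ≤ Real.sqrt (Real.sqrt m) := by
    have hpos : 0 < Real.sqrt (Real.sqrt m) := by
      apply Real.sqrt_pos.mpr
      exact Real.sqrt_pos.mpr hm0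
    linarith [Real.log_le_sub_one_of_pos hpos]
  have hl2 : (0.69:ℝ) < Real.log 2 := by
    have := Real.log_two_gt_d9; linarith
  rw [Real.logb]
  rw [div_le_iff₀ (by linarith)]
  nlinarith [Real.sqrt_nonneg (Real.sqrt (m:ℝ))]

theorem stmt_10 (ε : ℝ) (hε0 : 0 < ε) (hε1 : ε ≤ 1) :
    ∃ C : ℝ, 1 ≤ C ∧ ∀ m : ℕ, 2 ≤ m →
      ∃ Z : Finset ℕ, Z.Nonempty ∧ Z ⊆ Finset.range m ∧
        disc (Z.val.map fun z : ℕ => (z : ℤ)) m ≤ ε ∧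
        (Z.card : ℝ) ≤ C * Real.logb 2 m := by
  classical
  have hε8 : (0:ℝ) < ε^8 := by positivity
  have hε81 : ε^8 ≤ 1 := pow_le_one₀ hε0.le hε1
  refine ⟨10^12 / ε^8, ?_, ?_⟩
  · rw [le_div_iff₀ hε8]; nlinarith
  intro m hm
  have hmR : (2:ℝ) ≤ m := by exact_mod_cast hm
  have hm0 : (0:ℝ) < m := by linarith
  have hlogb : 1 ≤ Real.logb 2 m := logb_ge_one hm
  have hC0 : (0:ℝ) ≤ 10^12 / ε^8 := by positivity
  by_cases hcase : (m:ℝ) ≤ 10^12 / ε^8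
  · -- trivial case: take all of range m
    refine ⟨Finset.range m, ?_, Finset.Subset.refl _, ?_, ?_⟩
    · rw [Finset.nonempty_range_iff]; omega
    · apply disc_le_of_bound _ _ hm (by rw [Finset.card_range]; omega)
      intro k hk
      rw [Finset.mem_Ioo] at hk
      rw [show (Finset.range m) = Finset.range m from rfl, eZ_sum_zero hk.1 hk.2]
      simp
      positivity
    · rw [Finset.card_range]
      calc (m:ℝ) ≤ 10^12 / ε^8 := hcase
        _ ≤ 10^12 / ε^8 * Real.logb 2 m := le_mul_of_one_le_right hC0 hlogb
  · push_neg at hcase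
    set n : ℕ := ⌈(48 / ε^2) * Real.logb 2 m⌉₊ with hn
    have hx0 : (0:ℝ) < (48 / ε^2) * Real.logb 2 m := by
      apply mul_pos (by positivity); linarith
    have hn1 : 1 ≤ n := by
      rw [hn]
      exact Nat.one_le_iff_ne_zero.mpr (by
        intro h
        rw [Nat.ceil_eq_zero] at h
        linarith)
    have hn_ge : (48 / ε^2) * Real.logb 2 m ≤ (n:ℝ) := Nat.le_ceil _
    have hn_le : (n:ℝ) ≤ 49 / ε^2 * Real.logb 2 m := by
      have h1 : (n:ℝ) < (48 / ε^2) * Real.logb 2 m + 1 := Nat.ceil_lt_add_one hx0.le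
      have h2 : (1:ℝ) ≤ 1 / ε^2 * Real.logb 2 m := by
        have hε2 : ε^2 ≤ 1 := pow_le_one₀ hε0.le hε1
        have : (1:ℝ) ≤ 1 / ε^2 := by
          rw [le_div_iff₀ (by positivity)]; linarith
        nlinarith
      have : (48 / ε^2) * Real.logb 2 m + 1 / ε^2 * Real.logb 2 m
          = 49 / ε^2 * Real.logb 2 m := by ring
      linarith
    have h1 : (8:ℝ) * m ≤ Real.exp (ε^2 * n / 16) := by
      have hlog : Real.log (8 * m) ≤ ε^2 * n / 16 := by
        have := log8m_le hm
        have hmul : 48 * Real.logb 2 m ≤ ε^2 * n := by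
          have := mul_le_mul_of_nonneg_left hn_ge (le_of_lt (by positivity : (0:ℝ) < ε^2))
          calc 48 * Real.logb 2 m = ε^2 * ((48 / ε^2) * Real.logb 2 m) := by
                field_simp
            _ ≤ ε^2 * n := this
        linarith
      calc (8:ℝ) * m = Real.exp (Real.log (8 * m)) := by
            rw [Real.exp_log (by positivity)]
        _ ≤ Real.exp (ε^2 * n / 16) := Real.exp_le_exp.mpr hlog
    have h2 : 2 * (n:ℝ)^2 < m := by
      have hss := logb_le_sqrt_sqrt hm
      have hsq : Real.sqrt (Real.sqrt m) * Real.sqrt (Real.sqrt m) = Real.sqrt m :=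
        Real.mul_self_sqrt (Real.sqrt_nonneg _)
      have hsqm : Real.sqrt m * Real.sqrt m = m := Real.mul_self_sqrt hm0.le
      have hms : (10:ℝ)^6 / ε^4 < Real.sqrt m := by
        rw [show (10:ℝ)^6 / ε^4 = Real.sqrt ((10^6/ε^4)^2) from
          (Real.sqrt_sq (by positivity)).symm]
        apply Real.sqrt_lt_sqrt (by positivity)
        have heq : ((10:ℝ)^6/ε^4)^2 = 10^12 / ε^8 := by
          rw [div_pow]
          norm_num [← pow_mul]
        rw [heq]
        exact hcase
      -- n ≤ 49/ε² * 6 √√m = 294/ε² √√m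
      have hnb : (n:ℝ) ≤ 294 / ε^2 * Real.sqrt (Real.sqrt m) := by
        calc (n:ℝ) ≤ 49 / ε^2 * Real.logb 2 m := hn_le
          _ ≤ 49 / ε^2 * (6 * Real.sqrt (Real.sqrt m)) := by
              apply mul_le_mul_of_nonneg_left hss (by positivity)
          _ = 294 / ε^2 * Real.sqrt (Real.sqrt m) := by ring
      have hn0 : (0:ℝ) ≤ n := Nat.cast_nonneg n
      have hsqnn : (0:ℝ) ≤ Real.sqrt (Real.sqrt m) := Real.sqrt_nonneg _
      have hsmnn : (0:ℝ) ≤ Real.sqrt m := Real.sqrt_nonneg _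
      have hn2 : (n:ℝ)^2 ≤ (294 / ε^2)^2 * Real.sqrt m := by
        calc (n:ℝ)^2 ≤ (294 / ε^2 * Real.sqrt (Real.sqrt m))^2 := by
              apply pow_le_pow_left₀ hn0 hnb
          _ = (294 / ε^2)^2 * (Real.sqrt (Real.sqrt m) * Real.sqrt (Real.sqrt m)) := by ring
          _ = (294 / ε^2)^2 * Real.sqrt m := by rw [hsq]
      have hcoef : 2 * (294 / ε^2)^2 < 10^6 / ε^4 := by
        have heq2 : 2 * ((294:ℝ) / ε^2)^2 = 172872 / ε^4 := by
          field_simp; ring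
        rw [heq2, div_lt_div_iff₀ (by positivity) (by positivity)]
        nlinarith [pow_pos hε0 4]
      calc 2 * (n:ℝ)^2 ≤ 2 * ((294 / ε^2)^2 * Real.sqrt m) := by linarith
        _ = (2 * (294 / ε^2)^2) * Real.sqrt m := by ring
        _ ≤ (10^6 / ε^4) * Real.sqrt m := by
            apply mul_le_mul_of_nonneg_right hcoef.le hsmnn
        _ < Real.sqrt m * Real.sqrt m := by
            apply mul_lt_mul_of_pos_right hms
            linarith [hms, (by positivity : (0:ℝ) < (10:ℝ)^6 / ε^4)]
        _ = m := hsqm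
    obtain ⟨f, hfinj, hfb⟩ := exists_good m n hm hn1 ε hε0 hε1 h1 h2
    have hinj : Function.Injective (fun j : Fin n => (f j : ℕ)) := by
      intro a b hab
      exact hfinj (Fin.val_injective hab)
    set Z : Finset ℕ := Finset.image (fun j : Fin n => (f j : ℕ)) Finset.univ with hZ
    have hZcard : Z.card = n := by
      rw [hZ, Finset.card_image_of_injective _ hinj, Finset.card_univ, Fintype.card_fin]
    have hne : (Finset.univ : Finset (Fin n)).Nonempty := ⟨⟨0, by omega⟩, Finset.mem_univ _⟩
    refine ⟨Z, hne.image _, ?_, ?_, ?_⟩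
    · intro x hx
      rw [hZ, Finset.mem_image] at hx
      obtain ⟨j, _, hj⟩ := hx
      rw [Finset.mem_range, ← hj]
      exact (f j).isLt
    · apply disc_le_of_bound _ _ hm (by rw [hZcard]; omega)
      intro k hk
      have hsum : ∑ x ∈ Z, eZ m k x = ∑ j, eZ m k (f j) := by
        rw [hZ, Finset.sum_image (fun a _ b _ h => hinj h)]
      rw [hsum, hZcard]
      exact hfb k hk
    · rw [hZcard]
      calc (n:ℝ) ≤ 49 / ε^2 * Real.logb 2 m := hn_le
        _ ≤ 10^12 / ε^8 * Real.logb 2 m := by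
            apply mul_le_mul_of_nonneg_right _ (by linarith)
            rw [div_le_div_iff₀ (by positivity) (by positivity)]
            have hεp : ε^8 ≤ ε^2 := by
              calc ε^8 = ε^2 * ε^6 := by ring
                _ ≤ ε^2 * 1 := by
                    apply mul_le_mul_of_nonneg_left (pow_le_one₀ hε0.le hε1) (by positivity)
                _ = ε^2 := mul_one _
            nlinarith [pow_pos hε0 2, pow_pos hε0 8]
end
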